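/- arXiv:1006.4744 — 10 statements merged into one kernel-verified Lean document; each statement's English description precedes it below -/
import Mathlib

section
/- Let k be a natural number with k > 2 and let g : (0,∞) → ℝ be differentiable. If the function r ↦ r^{k−2}·g′(r) is Lebesgue integrable on (0,∞), then lim_{r→0⁺} r^{k−2}·g(r) = 0. -/
open MeasureTheory Filter Set

/-- Lemma 5 ('rand0'): if `k > 2`, `g` is differentiable on `(0,∞)` and
`r ↦ r^(k-2) * g'(r)` is Lebesgue integrable on `(0,∞)`, then
`lim_{r→0⁺} r^(k-2) * g(r) = 0`. -/
theorem stmt0 (k : ℕ) (hk : 2 < k) (g : ℝ → ℝ)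
    (hg : DifferentiableOn ℝ g (Set.Ioi 0))
    (hint : IntegrableOn (fun r : ℝ => r ^ (k - 2) * deriv g r) (Set.Ioi 0)) :
    Tendsto (fun r : ℝ => r ^ (k - 2) * g r) (nhdsWithin 0 (Set.Ioi 0)) (nhds 0) := by
  set n := k - 2 with hn
  have hn1 : 1 ≤ n := by omega
  have hmeas : Measurable (deriv g) := measurable_deriv g
  -- the dominating function
  set bound : ℝ → ℝ := (Set.Ioc (0:ℝ) 1).indicator (fun t => t ^ n * |deriv g t|)
    with hbounddef
  have hbound_nonneg : ∀ t, 0 ≤ bound t := by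
    intro t
    rw [hbounddef]
    by_cases ht : t ∈ Set.Ioc (0:ℝ) 1
    · rw [Set.indicator_of_mem ht]
      exact mul_nonneg (pow_nonneg (le_of_lt ht.1) n) (abs_nonneg _)
    · rw [Set.indicator_of_notMem ht]
  have hbound_int : Integrable bound := by
    rw [hbounddef, integrable_indicator_iff measurableSet_Ioc]
    have h1 : IntegrableOn (fun t => t ^ n * deriv g t) (Set.Ioc (0:ℝ) 1) :=
      hint.mono_set Set.Ioc_subset_Ioi_self
    exact MeasureTheory.IntegrableOn.congr_fun h1.abs (fun t ht => by
      simp [abs_mul, abs_of_nonneg (pow_nonneg (le_of_lt ht.1) n)]) measurableSet_Ioc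
  -- FTC identity on (0,1)
  have key : ∀ r ∈ Set.Ioo (0:ℝ) 1,
      r ^ n * g r = r ^ n * g 1 - ∫ t in Set.Ioc r 1, r ^ n * deriv g t := by
    intro r hr
    have hr0 : 0 < r := hr.1
    have hr1 : r ≤ 1 := le_of_lt hr.2
    have hIoc : Set.Ioc r 1 ⊆ Set.Ioi (0:ℝ) := fun t ht => lt_trans hr0 ht.1
    have h1 : IntegrableOn (fun t => t ^ n * deriv g t) (Set.Ioc r 1) :=
      hint.mono_set hIoc
    have hint' : IntegrableOn (deriv g) (Set.Ioc r 1) := by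
      refine Integrable.mono' ((h1.abs).const_mul (r⁻¹ ^ n)) hmeas.aestronglyMeasurable ?_
      rw [ae_restrict_iff' measurableSet_Ioc]
      refine ae_of_all _ (fun t ht => ?_)
      have ht0 : 0 < t := lt_trans hr0 ht.1
      have hpow : r ^ n ≤ t ^ n := pow_le_pow_left₀ (le_of_lt hr0) (le_of_lt ht.1) n
      have hrn : 0 < r ^ n := pow_pos hr0 n
      rw [Real.norm_eq_abs, abs_mul, abs_of_nonneg (le_of_lt (pow_pos ht0 n))]
      rw [inv_pow, ← div_eq_inv_mul, le_div_iff₀ hrn]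
      calc |deriv g t| * r ^ n ≤ |deriv g t| * t ^ n :=
            mul_le_mul_of_nonneg_left hpow (abs_nonneg _)
        _ = t ^ n * |deriv g t| := mul_comm _ _
    have hderiv : ∀ x ∈ Set.uIcc r 1, HasDerivAt g (deriv g x) x := by
      intro x hx
      rw [Set.uIcc_of_le hr1] at hx
      have hx0 : (0:ℝ) < x := lt_of_lt_of_le hr0 hx.1
      exact ((hg x hx0).differentiableAt (Ioi_mem_nhds hx0)).hasDerivAt
    have hii : IntervalIntegrable (deriv g) volume r 1 := by
      rw [intervalIntegrable_iff_integrableOn_Ioc_of_le hr1]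
      exact hint'
    have hftc : ∫ t in r..1, deriv g t = g 1 - g r :=
      intervalIntegral.integral_eq_sub_of_hasDerivAt hderiv hii
    rw [intervalIntegral.integral_of_le hr1] at hftc
    rw [MeasureTheory.integral_const_mul, hftc]
    ring
  -- first piece tends to 0
  have hpow0 : Tendsto (fun r : ℝ => r ^ n) (nhdsWithin 0 (Set.Ioi 0)) (nhds 0) := by
    have h0 : Tendsto (fun r : ℝ => r ^ n) (nhds (0:ℝ)) (nhds ((0:ℝ) ^ n)) :=
      (continuous_pow n).tendsto 0
    rw [zero_pow (by omega)] at h0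
    exact h0.mono_left nhdsWithin_le_nhds
  have h2 : Tendsto (fun r : ℝ => r ^ n * g 1) (nhdsWithin 0 (Set.Ioi 0)) (nhds 0) := by
    simpa using hpow0.mul_const (g 1)
  -- second piece tends to 0 by dominated convergence
  have h3 : Tendsto (fun r : ℝ => ∫ t in Set.Ioc r 1, r ^ n * deriv g t)
      (nhdsWithin 0 (Set.Ioi 0)) (nhds 0) := by
    set F : ℝ → ℝ → ℝ := fun r => (Set.Ioc r 1).indicator (fun t => r ^ n * deriv g t)
      with hFdef
    have hmain : Tendsto (fun r : ℝ => ∫ t, F r t) (nhdsWithin 0 (Set.Ioi 0))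
        (nhds (∫ _t : ℝ, (0:ℝ))) := by
      refine MeasureTheory.tendsto_integral_filter_of_dominated_convergence bound
        ?_ ?_ hbound_int ?_
      · exact Eventually.of_forall (fun r =>
          ((hmeas.const_mul _).indicator measurableSet_Ioc).aestronglyMeasurable)
      · filter_upwards [self_mem_nhdsWithin] with r hr
        refine ae_of_all _ (fun t => ?_)
        show ‖(Set.Ioc r 1).indicator (fun t => r ^ n * deriv g t) t‖ ≤ bound t
        by_cases ht : t ∈ Set.Ioc r 1
        · rw [Set.indicator_of_mem ht]
          have ht0 : 0 < t := lt_trans hr ht.1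
          have htmem : t ∈ Set.Ioc (0:ℝ) 1 := ⟨ht0, ht.2⟩
          rw [hbounddef, Set.indicator_of_mem htmem, Real.norm_eq_abs, abs_mul,
            abs_of_nonneg (le_of_lt (pow_pos hr n))]
          exact mul_le_mul_of_nonneg_right
            (pow_le_pow_left₀ (le_of_lt hr) (le_of_lt ht.1) n) (abs_nonneg _)
        · rw [Set.indicator_of_notMem ht]
          simpa using hbound_nonneg t
      · refine ae_of_all _ (fun t => ?_)
        have hbase : Tendsto (fun r : ℝ => r ^ n * deriv g t)
            (nhdsWithin 0 (Set.Ioi 0)) (nhds 0) := by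
          simpa using hpow0.mul_const (deriv g t)
        by_cases ht : t ∈ Set.Ioc (0:ℝ) 1
        · refine hbase.congr' ?_
          have : Set.Ioo (0:ℝ) t ∈ nhdsWithin 0 (Set.Ioi 0) :=
            Ioo_mem_nhdsGT_of_mem ⟨le_refl 0, ht.1⟩
          filter_upwards [this] with r hr
          show r ^ n * deriv g t
            = (Set.Ioc r 1).indicator (fun t => r ^ n * deriv g t) t
          rw [Set.indicator_of_mem (show t ∈ Set.Ioc r 1 from ⟨hr.2, ht.2⟩)]
        · have : ∀ r, r ∈ Set.Ioi (0:ℝ) → F r t = 0 := by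
            intro r hr
            show (Set.Ioc r 1).indicator (fun t => r ^ n * deriv g t) t = 0
            rw [Set.indicator_of_notMem]
            intro hmem
            exact ht ⟨lt_trans hr hmem.1, hmem.2⟩
          refine tendsto_const_nhds.congr' ?_
          filter_upwards [self_mem_nhdsWithin] with r hr
          exact (this r hr).symm
    rw [integral_zero] at hmain
    refine hmain.congr (fun r => ?_)
    rw [hFdef, integral_indicator measurableSet_Ioc]
  -- put everything together
  have h4 := h2.sub h3
  rw [sub_zero] at h4
  refine h4.congr' ?_
  filter_upwards [Ioo_mem_nhdsGT_of_mem (Set.left_mem_Ico.mpr one_pos)] with r hr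
  exact (key r hr).symm
end

section
/- Let t be a natural number, let a ∈ ℝ, and let F, h : ℝ → ℝ be t times continuously differentiable. Then ∑_{k=0}^{t} (−1)^k · binom(t,k) · ( d^{t−k}/du^{t−k} [ F(u)·h^{(k)}(u) ] evaluated at u = a ) = F^{(t)}(a) · h(a). -/
lemma myAdd {n : ℕ} {f g : ℝ → ℝ} (hf : ContDiff ℝ n f) (hg : ContDiff ℝ n g) (x : ℝ) :
    iteratedDeriv n (fun u => f u + g u) x = iteratedDeriv n f x + iteratedDeriv n g x := by
  simp_rw [← iteratedDerivWithin_univ]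
  exact iteratedDerivWithin_add (Set.mem_univ x) uniqueDiffOn_univ hf.contDiffAt.contDiffWithinAt hg.contDiffAt.contDiffWithinAt

lemma myCD {n k : ℕ} {f : ℝ → ℝ} (hf : ContDiff ℝ (n + k : ℕ) f) :
    ContDiff ℝ n (iteratedDeriv k f) := by
  rw [iteratedDeriv_eq_iterate]
  exact ContDiff.iterate_deriv' n k hf

lemma leibniz (n : ℕ) (f g : ℝ → ℝ) (hf : ContDiff ℝ n f) (hg : ContDiff ℝ n g) (x : ℝ) :
    iteratedDeriv n (fun u => f u * g u) x
      = ∑ i ∈ Finset.range (n + 1),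
          (n.choose i : ℝ) * (iteratedDeriv i f x * iteratedDeriv (n - i) g x) := by
  induction n generalizing f g x with
  | zero => simp
  | succ n ih =>
    rw [show ((n+1 : ℕ) : WithTop ℕ∞) = (n : WithTop ℕ∞) + 1 by push_cast; rfl] at hf hg
    have hf' : Differentiable ℝ f := hf.one_of_succ.differentiable one_ne_zero
    have hg' : Differentiable ℝ g := hg.one_of_succ.differentiable one_ne_zero
    have hdf : ContDiff ℝ n (deriv f) := (contDiff_succ_iff_deriv.mp hf).2.2
    have hdg : ContDiff ℝ n (deriv g) := (contDiff_succ_iff_deriv.mp hg).2.2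
    have hfn : ContDiff ℝ n f := hf.of_succ
    have hgn : ContDiff ℝ n g := hg.of_succ
    have key : deriv (fun u => f u * g u)
        = fun u => deriv f u * g u + f u * deriv g u := by
      funext u
      exact deriv_mul (hf'.differentiableAt) (hg'.differentiableAt)
    rw [iteratedDeriv_succ', key,
      myAdd ((hdf.mul hgn)) ((hfn.mul hdg)) x, ih _ _ hdf hgn x, ih _ _ hfn hdg x]
    have e1 : ∀ i, iteratedDeriv i (deriv f) = iteratedDeriv (i+1) f := by
      intro i; rw [iteratedDeriv_succ']
    have e2 : ∀ i, iteratedDeriv i (deriv g) = iteratedDeriv (i+1) g := by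
      intro i; rw [iteratedDeriv_succ']
    simp only [e1, e2]
    have fix2 : ∑ i ∈ Finset.range (n+1),
          (n.choose i : ℝ) * (iteratedDeriv i f x * iteratedDeriv (n - i + 1) g x)
        = ∑ i ∈ Finset.range (n+1),
          (n.choose i : ℝ) * (iteratedDeriv i f x * iteratedDeriv (n + 1 - i) g x) := by
      apply Finset.sum_congr rfl
      intro i hi
      rw [Finset.mem_range] at hi
      have : n - i + 1 = n + 1 - i := by omega
      rw [this]
    rw [fix2]
    rw [Finset.sum_range_succ' (fun i => ((n+1).choose i : ℝ) *
      (iteratedDeriv i f x * iteratedDeriv (n + 1 - i) g x))]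
    have hc : ∀ i, ((n+1).choose (i+1) : ℝ) = (n.choose i : ℝ) + (n.choose (i+1) : ℝ) := by
      intro i; rw [Nat.choose_succ_succ]; push_cast; ring
    have step : ∀ i ∈ Finset.range (n+1),
        ((n+1).choose (i+1) : ℝ) * (iteratedDeriv (i+1) f x * iteratedDeriv (n + 1 - (i+1)) g x)
        = (n.choose i : ℝ) * (iteratedDeriv (i+1) f x * iteratedDeriv (n - i) g x)
          + (n.choose (i+1) : ℝ) * (iteratedDeriv (i+1) f x * iteratedDeriv (n - i) g x) := by
      intro i _
      have : n + 1 - (i+1) = n - i := by omega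
      rw [this, hc i]; ring
    rw [Finset.sum_congr rfl step, Finset.sum_add_distrib]
    have last : (∑ i ∈ Finset.range (n+1),
        (n.choose (i+1) : ℝ) * (iteratedDeriv (i+1) f x * iteratedDeriv (n - i) g x))
          + ((n+1).choose 0 : ℝ) * (iteratedDeriv 0 f x * iteratedDeriv (n + 1 - 0) g x)
        = ∑ i ∈ Finset.range (n+1),
            (n.choose i : ℝ) * (iteratedDeriv i f x * iteratedDeriv (n + 1 - i) g x) := by
      rw [Finset.sum_range_succ (fun i => (n.choose (i+1) : ℝ) *
        (iteratedDeriv (i+1) f x * iteratedDeriv (n - i) g x)), Nat.choose_succ_self]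
      rw [Finset.sum_range_succ' (fun i => (n.choose i : ℝ) *
        (iteratedDeriv i f x * iteratedDeriv (n + 1 - i) g x))]
      simp [Nat.succ_sub_succ]
    rw [add_assoc, last]

/-- The scalar Leibniz/binomial-inversion identity behind Lemma 7 ('xkwad'):
`∑_{k=0}^{t} (−1)^k C(t,k) (d/du)^{t−k}[F(u)·h^{(k)}(u)]|_{u=a} = F^{(t)}(a)·h(a)`. -/
theorem stmt1 (t : ℕ) (a : ℝ) (F h : ℝ → ℝ)
    (hF : ContDiff ℝ t F) (hh : ContDiff ℝ t h) :
    ∑ k ∈ Finset.range (t + 1),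
        (-1 : ℝ) ^ k * (t.choose k) *
          iteratedDeriv (t - k) (fun u => F u * iteratedDeriv k h u) a
      = iteratedDeriv t F a * h a := by
  have myII : ∀ (m k : ℕ) (f : ℝ → ℝ), iteratedDeriv m (iteratedDeriv k f) = iteratedDeriv (m + k) f := by
    intro m k f
    simp only [iteratedDeriv_eq_iterate, ← Function.iterate_add_apply]
  have step1 : ∀ k ∈ Finset.range (t + 1),
      (-1 : ℝ) ^ k * (t.choose k) *
        iteratedDeriv (t - k) (fun u => F u * iteratedDeriv k h u) a
      = ∑ i ∈ Finset.range (t + 1 - k),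
          ((-1 : ℝ) ^ k * (t.choose k) * ((t - k).choose i) *
            (iteratedDeriv i F a * iteratedDeriv (t - i) h a)) := by
    intro k hk
    rw [Finset.mem_range] at hk
    have hk' : k ≤ t := by omega
    have hFk : ContDiff ℝ (t - k : ℕ) F := by
      apply hF.of_le
      exact_mod_cast Nat.cast_le.mpr (Nat.sub_le t k)
    have hhk : ContDiff ℝ ((t - k) + k : ℕ) h := by
      have : t - k + k = t := by omega
      rw [this]; exact hh
    have hhk' : ContDiff ℝ (t - k : ℕ) (iteratedDeriv k h) := myCD hhk
    rw [leibniz (t - k) F (iteratedDeriv k h) hFk hhk' a]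
    have hrange : t - k + 1 = t + 1 - k := by omega
    rw [Finset.mul_sum, ← hrange]
    apply Finset.sum_congr rfl
    intro i hi
    rw [Finset.mem_range] at hi
    rw [myII (t - k - i) k h]
    have : t - k - i + k = t - i := by omega
    rw [this]
    ring
  rw [Finset.sum_congr rfl step1]
  rw [Finset.sum_comm' (s' := fun i => Finset.range (t + 1 - i)) (t' := Finset.range (t + 1))
    (by intro k i; simp only [Finset.mem_range]; omega)]
  have inner : ∀ i ∈ Finset.range (t + 1),
      (∑ k ∈ Finset.range (t + 1 - i),
        ((-1 : ℝ) ^ k * (t.choose k) * ((t - k).choose i) *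
          (iteratedDeriv i F a * iteratedDeriv (t - i) h a)))
      = (if i = t then 1 else 0) *
          (iteratedDeriv i F a * iteratedDeriv (t - i) h a) := by
    intro i hi
    rw [Finset.mem_range] at hi
    have hi' : i ≤ t := by omega
    have hchoose : ∀ k ∈ Finset.range (t + 1 - i),
        ((-1 : ℝ) ^ k * (t.choose k) * ((t - k).choose i) *
          (iteratedDeriv i F a * iteratedDeriv (t - i) h a))
        = (t.choose i : ℝ) * ((-1 : ℝ) ^ k * ((t - i).choose k)) *
          (iteratedDeriv i F a * iteratedDeriv (t - i) h a) := by
      intro k hk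
      rw [Finset.mem_range] at hk
      have hky : k + i ≤ t := by omega
      have h1 : t.choose (k + i) * (k + i).choose k = t.choose k * (t - k).choose i := by
        have := Nat.choose_mul (n := t) (k := k + i) (s := k) (Nat.le_add_right k i)
        simpa [Nat.add_sub_cancel_left] using this
      have h2 : t.choose (k + i) * (k + i).choose i = t.choose i * (t - i).choose k := by
        have := Nat.choose_mul (n := t) (k := k + i) (s := i) (Nat.le_add_left i k)
        simpa [Nat.add_sub_cancel] using this
      have h3 : (k + i).choose k = (k + i).choose i := Nat.choose_symm_add
      have h4 : (t.choose k * (t - k).choose i : ℕ) = t.choose i * (t - i).choose k := by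
        rw [← h1, h3, h2]
      have h4' : (t.choose k : ℝ) * ((t - k).choose i) = (t.choose i : ℝ) * ((t - i).choose k) := by
        exact_mod_cast congrArg (Nat.cast : ℕ → ℝ) h4
      calc (-1 : ℝ) ^ k * (t.choose k) * ((t - k).choose i) *
            (iteratedDeriv i F a * iteratedDeriv (t - i) h a)
          = (-1 : ℝ) ^ k * ((t.choose k : ℝ) * ((t - k).choose i)) *
            (iteratedDeriv i F a * iteratedDeriv (t - i) h a) := by ring
        _ = (-1 : ℝ) ^ k * ((t.choose i : ℝ) * ((t - i).choose k)) *
            (iteratedDeriv i F a * iteratedDeriv (t - i) h a) := by rw [h4']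
        _ = (t.choose i : ℝ) * ((-1 : ℝ) ^ k * ((t - i).choose k)) *
            (iteratedDeriv i F a * iteratedDeriv (t - i) h a) := by ring
    rw [Finset.sum_congr rfl hchoose, ← Finset.sum_mul, ← Finset.mul_sum]
    have halt : (∑ k ∈ Finset.range (t + 1 - i), ((-1 : ℝ) ^ k * ((t - i).choose k)))
        = if t - i = 0 then 1 else 0 := by
      have hr : t + 1 - i = (t - i) + 1 := by omega
      rw [hr]
      have := Int.alternating_sum_range_choose (n := t - i)
      exact_mod_cast congrArg (Int.cast : ℤ → ℝ) this
    rw [halt]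
    have : (if t - i = 0 then (1:ℝ) else 0) = if i = t then 1 else 0 := by
      by_cases hit : i = t <;> simp [hit] <;> omega
    rw [this]
    by_cases hit : i = t <;> simp [hit]
  rw [Finset.sum_congr rfl inner]
  simp only [ite_mul, one_mul, zero_mul]
  rw [Finset.sum_ite_eq' (Finset.range (t + 1)) t
    (fun i => iteratedDeriv i F a * iteratedDeriv (t - i) h a)]
  simp
end

section
/- Let m, n be natural numbers with m ≥ 1 and set M := m − 2n, and assume M > 0. Let f : [0,∞) → ℝ be n times continuously differentiable such that: (a) for every 0 ≤ j ≤ n, the function r ↦ r^{M+2j−1}·f^{(j)}(r²) is Lebesgue integrable on (0,∞); (b) for every 0 ≤ j ≤ n−1, lim_{r→∞} r^{M+2j}·f^{(j)}(r²) = 0. Then (−1)^n · π^{−n} · ∫_{ℝ^m} f^{(n)}(|x|²) dx = ∫_{ℝ^M} f(|y|²) dy, where both integrals are Lebesgue integrals over Euclidean space and |·| denotes the Euclidean norm. -/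
open MeasureTheory Filter Set


lemma my_ibp (a : ℕ) (g : ℝ → ℝ) (hg : ContDiffOn ℝ 1 g (Set.Ici 0))
    (h1 : IntegrableOn (fun r : ℝ => r ^ a * g (r ^ 2)) (Set.Ioi 0))
    (h2 : IntegrableOn (fun r : ℝ => r ^ (a + 2) * derivWithin g (Set.Ici 0) (r ^ 2)) (Set.Ioi 0))
    (h3 : Tendsto (fun r : ℝ => r ^ (a + 1) * g (r ^ 2)) atTop (nhds 0)) :
    ∫ r in Set.Ioi (0 : ℝ), r ^ (a + 2) * derivWithin g (Set.Ici 0) (r ^ 2)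
      = -(((a : ℝ) + 1) / 2) * ∫ r in Set.Ioi (0 : ℝ), r ^ a * g (r ^ 2) := by
  set g' := derivWithin g (Set.Ici 0) with hg'
  set F : ℝ → ℝ := fun r => (1 / 2) * (r ^ (a + 1) * g (r ^ 2)) with hF
  set φ : ℝ → ℝ := fun r => ((a : ℝ) + 1) / 2 * (r ^ a * g (r ^ 2)) + r ^ (a + 2) * g' (r ^ 2)
    with hφ
  have hderiv : ∀ r ∈ Set.Ioi (0 : ℝ), HasDerivAt F (φ r) r := by
    intro r hr
    have hr0 : (0 : ℝ) < r := hr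
    have hr2 : (0 : ℝ) < r ^ 2 := by positivity
    have hmem : Set.Ici (0 : ℝ) ∈ nhds (r ^ 2) := Ici_mem_nhds hr2
    have hgd : HasDerivAt g (g' (r ^ 2)) (r ^ 2) := by
      have hca : ContDiffAt ℝ 1 g (r ^ 2) := hg.contDiffAt hmem
      have := (hca.differentiableAt one_ne_zero).hasDerivAt
      rwa [hg', derivWithin_of_mem_nhds hmem]
    have hsq := hasDerivAt_pow 2 r
    have hcomp := HasDerivAt.comp (h := fun x : ℝ => x ^ 2) (h₂ := g) r hgd hsq
    have hpow := hasDerivAt_pow (a + 1) r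
    have := (hpow.mul hcomp).const_mul (1 / 2 : ℝ)
    refine this.congr_deriv ?_
    simp only [hφ, Function.comp, pow_one, Nat.add_sub_cancel, Nat.cast_add, Nat.cast_one,
      Nat.cast_ofNat]
    ring
  have hφint : IntegrableOn φ (Set.Ioi 0) := (h1.const_mul _).add h2
  have hcont : ContinuousOn F (Set.Ici 0) := by
    apply ContinuousOn.mul continuousOn_const
    apply ContinuousOn.mul (continuous_pow _).continuousOn
    exact hg.continuousOn.comp (continuous_pow 2).continuousOn
      (fun x _ => by simp only [Set.mem_Ici]; positivity)
  have hFtop : Tendsto F atTop (nhds 0) := by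
    have := h3.const_mul (1 / 2 : ℝ)
    simpa [hF] using this
  have key := integral_Ioi_of_hasDerivAt_of_tendsto (hcont 0 Set.self_mem_Ici) hderiv hφint hFtop
  have hF0 : F 0 = 0 := by simp [hF]
  rw [hF0, sub_zero] at key
  have hsplit : ∫ r in Set.Ioi (0 : ℝ), φ r
      = ((a : ℝ) + 1) / 2 * (∫ r in Set.Ioi (0 : ℝ), r ^ a * g (r ^ 2))
        + ∫ r in Set.Ioi (0 : ℝ), r ^ (a + 2) * g' (r ^ 2) := by
    rw [integral_add (h1.const_mul _) h2, MeasureTheory.integral_const_mul]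
  rw [key] at hsplit
  linarith


lemma my_ball (k : ℕ) :
    (volume (Metric.ball (0 : EuclideanSpace ℝ (Fin (k + 1))) 1)).toReal
      = Real.sqrt Real.pi ^ (k + 1) / Real.Gamma (((k : ℝ) + 1) / 2 + 1) := by
  rw [EuclideanSpace.volume_ball]
  have h1 : (0 : ℝ) < Real.Gamma (((k : ℝ) + 1) / 2 + 1) := Real.Gamma_pos_of_pos (by positivity)
  have h2 : (0 : ℝ) ≤ Real.sqrt Real.pi ^ (k + 1) / Real.Gamma (((k : ℝ) + 1) / 2 + 1) := by
    positivity
  simp only [Fintype.card_fin, ENNReal.ofReal_one, one_pow, one_mul]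
  rw [show ((k + 1 : ℕ) : ℝ) = (k : ℝ) + 1 by push_cast; ring, ENNReal.toReal_ofReal h2]

lemma my_vol (a : ℕ) :
    ((a : ℝ) + 3) * (volume (Metric.ball (0 : EuclideanSpace ℝ (Fin (a + 3))) 1)).toReal
      = 2 * Real.pi * (volume (Metric.ball (0 : EuclideanSpace ℝ (Fin (a + 1))) 1)).toReal := by
  have hb3 := my_ball (a + 2)
  have hb1 := my_ball a
  rw [show a + 2 + 1 = a + 3 by ring] at hb3
  rw [hb3, hb1]
  have hc : ((a + 2 : ℕ) : ℝ) + 1 = (a : ℝ) + 3 := by push_cast; ring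
  rw [hc]
  have hG0 : (0 : ℝ) < Real.Gamma (((a : ℝ) + 1) / 2 + 1) := Real.Gamma_pos_of_pos (by positivity)
  have hGrec : Real.Gamma (((a : ℝ) + 3) / 2 + 1)
      = (((a : ℝ) + 3) / 2) * Real.Gamma (((a : ℝ) + 1) / 2 + 1) := by
    have h := Real.Gamma_add_one (s := ((a : ℝ) + 3) / 2) (by positivity)
    rw [h]
    congr 1
    ring
  have hsq : Real.sqrt Real.pi ^ (a + 3) = Real.sqrt Real.pi ^ (a + 1) * Real.pi := by
    rw [show a + 3 = (a + 1) + 2 by ring, pow_add, Real.sq_sqrt Real.pi_pos.le]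
  rw [hGrec, hsq]
  field_simp

lemma my_step (a : ℕ) (g : ℝ → ℝ) (hg : ContDiffOn ℝ 1 g (Set.Ici 0))
    (h1 : IntegrableOn (fun r : ℝ => r ^ a * g (r ^ 2)) (Set.Ioi 0))
    (h2 : IntegrableOn (fun r : ℝ => r ^ (a + 2) * derivWithin g (Set.Ici 0) (r ^ 2)) (Set.Ioi 0))
    (h3 : Tendsto (fun r : ℝ => r ^ (a + 1) * g (r ^ 2)) atTop (nhds 0)) :
    (-1 / Real.pi) * ∫ x : EuclideanSpace ℝ (Fin (a + 3)), derivWithin g (Set.Ici 0) (‖x‖ ^ 2)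
      = ∫ y : EuclideanSpace ℝ (Fin (a + 1)), g (‖y‖ ^ 2) := by
  haveI h3' : Nontrivial (EuclideanSpace ℝ (Fin (a + 3))) :=
    Module.nontrivial_of_finrank_pos (R := ℝ) (by rw [finrank_euclideanSpace_fin]; omega)
  haveI h1' : Nontrivial (EuclideanSpace ℝ (Fin (a + 1))) :=
    Module.nontrivial_of_finrank_pos (R := ℝ) (by rw [finrank_euclideanSpace_fin]; omega)
  have e1 := integral_fun_norm_addHaar (volume : Measure (EuclideanSpace ℝ (Fin (a + 3))))
    (fun r : ℝ => derivWithin g (Set.Ici 0) (r ^ 2))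
  have e2 := integral_fun_norm_addHaar (volume : Measure (EuclideanSpace ℝ (Fin (a + 1))))
    (fun r : ℝ => g (r ^ 2))
  simp only [finrank_euclideanSpace_fin, Nat.add_sub_cancel, show a + 3 - 1 = a + 2 from rfl, nsmul_eq_mul, smul_eq_mul] at e1 e2
  rw [e1, e2, my_ibp a g hg h1 h2 h3]
  simp only [measureReal_def]
  have hv := my_vol a
  have hπ : Real.pi ≠ 0 := Real.pi_ne_zero
  set V3 := (volume (Metric.ball (0 : EuclideanSpace ℝ (Fin (a + 3))) 1)).toReal
  set V1 := (volume (Metric.ball (0 : EuclideanSpace ℝ (Fin (a + 1))) 1)).toReal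
  set I := ∫ r in Set.Ioi (0 : ℝ), r ^ a * g (r ^ 2)
  push_cast
  field_simp
  linear_combination I * hv

theorem my_aux : ∀ (n m : ℕ), 2 * n < m → ∀ f : ℝ → ℝ, ContDiffOn ℝ n f (Set.Ici 0) →
    (∀ j ≤ n, IntegrableOn
      (fun r : ℝ => r ^ (m - 2 * n + 2 * j - 1) * iteratedDerivWithin j f (Set.Ici 0) (r ^ 2))
      (Set.Ioi 0)) →
    (∀ j < n, Tendsto
      (fun r : ℝ => r ^ (m - 2 * n + 2 * j) * iteratedDerivWithin j f (Set.Ici 0) (r ^ 2))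
      atTop (nhds 0)) →
    ((-1 : ℝ) ^ n / Real.pi ^ n) *
        ∫ x : EuclideanSpace ℝ (Fin m), iteratedDerivWithin n f (Set.Ici 0) (‖x‖ ^ 2)
      = ∫ y : EuclideanSpace ℝ (Fin (m - 2 * n)), f (‖y‖ ^ 2) := by
  intro n
  induction n with
  | zero =>
    intro m hm f hf hint hlim
    simp [iteratedDerivWithin_zero]
  | succ n IH =>
    intro m hm f hf hint hlim
    have hud : UniqueDiffOn ℝ (Set.Ici (0 : ℝ)) := uniqueDiffOn_Ici 0
    set f' := derivWithin f (Set.Ici 0) with hf'def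
    have hf'c : ContDiffOn ℝ n f' (Set.Ici 0) :=
      hf.derivWithin hud (by exact_mod_cast le_rfl)
    have hiter' : ∀ (j : ℕ) (r : ℝ), iteratedDerivWithin j f' (Set.Ici 0) (r ^ 2)
        = iteratedDerivWithin (j + 1) f (Set.Ici 0) (r ^ 2) := fun j r =>
      (congrFun iteratedDerivWithin_succ' (r ^ 2)).symm
    have hint' : ∀ j ≤ n, IntegrableOn
        (fun r : ℝ => r ^ (m - 2 * n + 2 * j - 1) * iteratedDerivWithin j f' (Set.Ici 0) (r ^ 2))
        (Set.Ioi 0) := by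
      intro j hj
      have hexp : m - 2 * n + 2 * j - 1 = m - 2 * (n + 1) + 2 * (j + 1) - 1 := by omega
      rw [hexp]
      simp only [hiter']
      exact hint (j + 1) (by omega)
    have hlim' : ∀ j < n, Tendsto
        (fun r : ℝ => r ^ (m - 2 * n + 2 * j) * iteratedDerivWithin j f' (Set.Ici 0) (r ^ 2))
        atTop (nhds 0) := by
      intro j hj
      have hexp : m - 2 * n + 2 * j = m - 2 * (n + 1) + 2 * (j + 1) := by omega
      rw [hexp]
      simp only [hiter']
      exact hlim (j + 1) (by omega)
    have IH2 := IH m (by omega) f' hf'c hint' hlim'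
    simp only [hiter'] at IH2
    set a := m - 2 * n - 3 with ha
    have ha3 : m - 2 * n = a + 3 := by omega
    have ha1 : m - 2 * (n + 1) = a + 1 := by omega
    have h1iter : ∀ r : ℝ, iteratedDerivWithin 1 f (Set.Ici 0) (r ^ 2) = f' (r ^ 2) :=
      fun r => congrFun iteratedDerivWithin_one (r ^ 2)
    have hs1 : IntegrableOn (fun r : ℝ => r ^ a * f (r ^ 2)) (Set.Ioi 0) := by
      have := hint 0 (by omega)
      simpa [iteratedDerivWithin_zero, show m - 2 * (n + 1) - 1 = a by omega, show m - 2 * (n + 1) + 2 * 0 - 1 = a by omega] using this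
    have hs2 : IntegrableOn (fun r : ℝ => r ^ (a + 2) * f' (r ^ 2)) (Set.Ioi 0) := by
      have := hint 1 (by omega)
      simp only [show m - 2 * (n + 1) + 2 * 1 - 1 = a + 2 by omega, h1iter] at this
      exact this
    have hs3 : Tendsto (fun r : ℝ => r ^ (a + 1) * f (r ^ 2)) atTop (nhds 0) := by
      have := hlim 0 (by omega)
      simpa [iteratedDerivWithin_zero, ha1, show m - 2 * (n + 1) + 2 * 0 = a + 1 by omega] using this
    have hstep := my_step a f (hf.of_le (by exact_mod_cast Nat.one_le_iff_ne_zero.mpr (Nat.succ_ne_zero n))) hs1 hs2 hs3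
    rw [ha1, ← hstep]
    rw [ha3] at IH2
    rw [← IH2]
    ring

/-- Theorem 3 ('dimensional reduction of Berezin integrals'), case `M = m − 2n > 0`:
`(−1)^n π^{−n} ∫_{ℝ^m} f^{(n)}(|x|²) dx = ∫_{ℝ^M} f(|y|²) dy`. -/
theorem stmt3 (m n : ℕ) (hm : 1 ≤ m) (hM : 2 * n < m)
    (f : ℝ → ℝ) (hf : ContDiffOn ℝ n f (Set.Ici 0))
    (hint : ∀ j ≤ n, IntegrableOn
      (fun r : ℝ => r ^ (m - 2 * n + 2 * j - 1) * iteratedDerivWithin j f (Set.Ici 0) (r ^ 2))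
      (Set.Ioi 0))
    (hlim : ∀ j < n, Tendsto
      (fun r : ℝ => r ^ (m - 2 * n + 2 * j) * iteratedDerivWithin j f (Set.Ici 0) (r ^ 2))
      atTop (nhds 0)) :
    ((-1 : ℝ) ^ n / Real.pi ^ n) *
        ∫ x : EuclideanSpace ℝ (Fin m), iteratedDerivWithin n f (Set.Ici 0) (‖x‖ ^ 2)
      = ∫ y : EuclideanSpace ℝ (Fin (m - 2 * n)), f (‖y‖ ^ 2) :=
  my_aux n m hM f hf hint hlim
end

section
/- Let m, n be natural numbers with m ≥ 2 even, and set M := m − 2n; assume M ≤ 0 (so M is a nonpositive even integer) and set k := −M/2. Let f : [0,∞) → ℝ be n times continuously differentiable such that: (a) for every k+1 ≤ j ≤ n, the function r ↦ r^{M+2j−1}·f^{(j)}(r²) is Lebesgue integrable on (0,∞); (b) for every k ≤ j ≤ n−1, lim_{r→∞} r^{M+2j}·f^{(j)}(r²) = 0. Then (−1)^n · π^{−n} · ∫_{ℝ^m} f^{(n)}(|x|²) dx = (−1)^k · π^{−k} · f^{(k)}(0). -/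
open MeasureTheory Filter Set

lemma ibp_aux (G g' : ℝ → ℝ) (e : ℕ)
    (hGc : ContinuousWithinAt G (Ici 0) 0)
    (hG : ∀ t : ℝ, 0 < t → HasDerivAt G (g' t) t)
    (hint1 : IntegrableOn (fun r : ℝ => (e : ℝ) * (r ^ (e - 1) * G (r ^ 2))) (Ioi 0))
    (hint2 : IntegrableOn (fun r : ℝ => 2 * (r ^ (e + 1) * g' (r ^ 2))) (Ioi 0))
    (hlim : Tendsto (fun r : ℝ => r ^ e * G (r ^ 2)) atTop (nhds 0)) :
    (e : ℝ) * (∫ r in Ioi (0 : ℝ), r ^ (e - 1) * G (r ^ 2))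
      + 2 * (∫ r in Ioi (0 : ℝ), r ^ (e + 1) * g' (r ^ 2))
      = - ((0 : ℝ) ^ e * G 0) := by
  have hF : ∀ r : ℝ, r ∈ Ioi (0 : ℝ) → HasDerivAt (fun r : ℝ => r ^ e * G (r ^ 2))
      ((e : ℝ) * (r ^ (e - 1) * G (r ^ 2)) + 2 * (r ^ (e + 1) * g' (r ^ 2))) r := by
    intro r hr
    have h2 : HasDerivAt (fun r : ℝ => r ^ 2) (2 * r) r := by
      simpa using hasDerivAt_pow 2 r
    have h3 : HasDerivAt (fun r : ℝ => G (r ^ 2)) (g' (r ^ 2) * (2 * r)) r :=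
      (hG (r ^ 2) (by have := hr.out; positivity)).comp r h2
    have := (hasDerivAt_pow e r).fun_mul h3
    exact this.congr_deriv (by ring)
  have hcont : ContinuousWithinAt (fun r : ℝ => r ^ e * G (r ^ 2)) (Ici 0) 0 := by
    apply ContinuousWithinAt.mul (continuous_pow e).continuousWithinAt
    have h2 : ContinuousWithinAt (fun r : ℝ => r ^ 2) (Ici 0) 0 :=
      (continuous_pow 2).continuousWithinAt
    exact ContinuousWithinAt.comp (t := Ici 0) (by simpa using hGc) h2 (fun x hx => Set.mem_Ici.mpr (pow_nonneg hx 2))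
  have hE := integral_Ioi_of_hasDerivAt_of_tendsto hcont hF (hint1.add hint2) hlim
  rw [integral_add hint1 hint2, MeasureTheory.integral_const_mul, MeasureTheory.integral_const_mul] at hE
  norm_num at hE
  exact hE

/-- Theorem 3 ('dimensional reduction of Berezin integrals'), case `M = m − 2n ∈ −2ℕ`
(`m` even, `k = −M/2`):
`(−1)^n π^{−n} ∫_{ℝ^m} f^{(n)}(|x|²) dx = (−1)^k π^{−k} f^{(k)}(0)`. -/
theorem stmt4 (m n k : ℕ) (hm : 2 ≤ m) (hme : Even m)
    (hM : (m : ℤ) - 2 * n ≤ 0) (hk : m + 2 * k = 2 * n)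
    (f : ℝ → ℝ) (hf : ContDiffOn ℝ n f (Set.Ici 0))
    (hint : ∀ j : ℕ, k + 1 ≤ j → j ≤ n → IntegrableOn
      (fun r : ℝ => r ^ ((m : ℤ) - 2 * n + 2 * j - 1) * iteratedDerivWithin j f (Set.Ici 0) (r ^ 2))
      (Set.Ioi 0))
    (hlim : ∀ j : ℕ, k ≤ j → j < n → Tendsto
      (fun r : ℝ => r ^ ((m : ℤ) - 2 * n + 2 * j) * iteratedDerivWithin j f (Set.Ici 0) (r ^ 2))
      atTop (nhds 0)) :
    ((-1 : ℝ) ^ n / Real.pi ^ n) *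
        ∫ x : EuclideanSpace ℝ (Fin m), iteratedDerivWithin n f (Set.Ici 0) (‖x‖ ^ 2)
      = ((-1 : ℝ) ^ k / Real.pi ^ k) * iteratedDerivWithin k f (Set.Ici 0) 0 := by
  obtain ⟨p, hp2⟩ := hme
  have hp : m = 2 * p := by omega
  have hn : n = k + p := by omega
  have hppos : 1 ≤ p := by omega
  set g : ℕ → ℝ → ℝ := fun j => iteratedDerivWithin j f (Set.Ici 0) with hg
  -- derivative of g j at positive points
  have hder : ∀ j : ℕ, j < n → ∀ t : ℝ, 0 < t → HasDerivAt (g j) (g (j + 1) t) t := by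
    intro j hj t ht
    have hd := hf.differentiableOn_iteratedDerivWithin
      (show (j : WithTop ℕ∞) < n by exact_mod_cast hj) (uniqueDiffOn_Ici 0)
    have h1 : HasDerivAt (g j) (derivWithin (g j) (Set.Ici 0) t) t :=
      ((hd t (le_of_lt ht)).hasDerivWithinAt).hasDerivAt (Ici_mem_nhds ht)
    rwa [show derivWithin (g j) (Set.Ici 0) t = g (j + 1) t from
      (congrFun iteratedDerivWithin_succ t).symm] at h1
  have hcont : ∀ j : ℕ, j ≤ n → ContinuousWithinAt (g j) (Set.Ici 0) 0 := by
    intro j hj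
    exact (hf.continuousOn_iteratedDerivWithin (by exact_mod_cast hj) (uniqueDiffOn_Ici 0))
      0 Set.self_mem_Ici
  -- integrability with natural exponents
  have hint' : ∀ q : ℕ, 1 ≤ q → q ≤ p →
      IntegrableOn (fun r : ℝ => r ^ (2 * q - 1) * g (k + q) (r ^ 2)) (Ioi 0) := by
    intro q hq hqp
    have h := hint (k + q) (by omega) (by omega)
    have he : (m : ℤ) - 2 * n + 2 * (k + q : ℕ) - 1 = ((2 * q - 1 : ℕ) : ℤ) := by omega
    rw [he] at h
    simpa only [zpow_natCast] using h
  -- the key integration-by-parts identity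
  have key : ∀ q : ℕ, 1 ≤ q → q ≤ p →
      (2 * (q - 1) : ℕ) * (∫ r in Ioi (0 : ℝ), r ^ (2 * (q - 1) - 1) * g (k + q - 1) (r ^ 2))
        + 2 * (∫ r in Ioi (0 : ℝ), r ^ (2 * (q - 1) + 1) * g (k + q) (r ^ 2))
        = - ((0 : ℝ) ^ (2 * (q - 1)) * g (k + q - 1) 0) := by
    intro q hq hqp
    have hkq : k + q - 1 + 1 = k + q := by omega
    apply ibp_aux (g (k + q - 1)) (g (k + q)) (2 * (q - 1))
    · exact hcont _ (by omega)
    · intro t ht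
      have := hder (k + q - 1) (by omega) t ht
      rwa [hkq] at this
    · -- integrability of the first term
      by_cases hq1 : q = 1
      · subst hq1
        have : (fun r : ℝ => ((2 * (1 - 1) : ℕ) : ℝ) * (r ^ (2 * (1 - 1) - 1) * g (k + 1 - 1) (r ^ 2)))
            = fun _ : ℝ => (0 : ℝ) := by
          funext r; norm_num
        rw [this]
        exact integrableOn_zero
      · have h := hint' (q - 1) (by omega) (by omega)
        have hkq' : k + (q - 1) = k + q - 1 := by omega
        have hee : 2 * (q - 1) - 1 = 2 * (q - 1) - 1 := rfl
        rw [hkq'] at h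
        exact (h.const_mul _)
    · have h := hint' q hq hqp
      have : 2 * (q - 1) + 1 = 2 * q - 1 := by omega
      rw [this]
      exact h.const_mul 2
    · have h := hlim (k + q - 1) (by omega) (by omega)
      have he : (m : ℤ) - 2 * n + 2 * (k + q - 1 : ℕ) = ((2 * (q - 1) : ℕ) : ℤ) := by omega
      rw [he] at h
      simpa only [zpow_natCast] using h
  -- the radial integral by induction
  have main : ∀ q : ℕ, 1 ≤ q → q ≤ p →
      (∫ r in Ioi (0 : ℝ), r ^ (2 * q - 1) * g (k + q) (r ^ 2))
        = (-1 : ℝ) ^ q * (Nat.factorial (q - 1) : ℝ) * g k 0 / 2 := by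
    intro q
    induction q with
    | zero => omega
    | succ q ih =>
      intro _ hqp
      by_cases hq0 : q = 0
      · subst hq0
        have h := key 1 le_rfl (by omega)
        norm_num at h ⊢
        linarith
      · have hq1 : 1 ≤ q := by omega
        have ihq := ih hq1 (by omega)
        have h := key (q + 1) (by omega) hqp
        have e1 : q + 1 - 1 = q := by omega
        have e2 : k + (q + 1) - 1 = k + q := by omega
        have e3 : 2 * q + 1 = 2 * (q + 1) - 1 := by omega
        rw [e1, e2, e3] at h
        rw [ihq] at h
        have h0 : (0 : ℝ) ^ (2 * q) = 0 := by
          apply zero_pow; omega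
        rw [h0] at h
        have hfac : ((Nat.factorial q : ℕ) : ℝ) = q * ((Nat.factorial (q - 1) : ℕ) : ℝ) := by
          rw_mod_cast [Nat.mul_factorial_pred (by omega)]
        have e4 : (q + 1) - 1 = q := by omega
        rw [e4]
        rw [pow_succ]
        rw [hfac]
        push_cast at h ⊢
        linarith
  have Ip := main p hppos le_rfl
  rw [← hn] at Ip
  -- Euclidean integral via polar coordinates
  haveI : Nonempty (Fin m) := ⟨⟨0, by omega⟩⟩
  haveI : Nontrivial (EuclideanSpace ℝ (Fin m)) := by
    apply Module.nontrivial_of_finrank_pos (R := ℝ)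
    rw [finrank_euclideanSpace_fin]
    omega
  have hpolar := integral_fun_norm_addHaar (volume : Measure (EuclideanSpace ℝ (Fin m)))
    (fun y => g n (y ^ 2))
  have hdim : Module.finrank ℝ (EuclideanSpace ℝ (Fin m)) = m := finrank_euclideanSpace_fin
  rw [hdim] at hpolar
  have hball : (volume (Metric.ball (0 : EuclideanSpace ℝ (Fin m)) 1)).toReal
      = Real.pi ^ p / (Nat.factorial p : ℝ) := by
    rw [EuclideanSpace.volume_ball]
    rw [Fintype.card_fin]
    simp only [ENNReal.ofReal_one, one_pow, one_mul]
    rw [ENNReal.toReal_ofReal (by positivity)]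
    rw [hp]
    rw [pow_mul, Real.sq_sqrt Real.pi_nonneg]
    congr 1
    have : ((2 * p : ℕ) : ℝ) / 2 + 1 = ((p : ℝ) + 1) := by push_cast; ring
    rw [this]
    exact_mod_cast Real.Gamma_nat_eq_factorial p
  rw [hpolar, measureReal_def, hball]
  have hm1 : m - 1 = 2 * p - 1 := by omega
  rw [hm1]
  simp only [smul_eq_mul, nsmul_eq_mul]
  rw [Ip]
  have h1 : (Nat.factorial p : ℝ) = p * Nat.factorial (p - 1) := by
    rw_mod_cast [Nat.mul_factorial_pred (by omega)]
  have hfply : (0:ℝ) < Nat.factorial (p - 1) := by positivity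
  have hs : ((-1 : ℝ)) ^ p * (-1) ^ p = 1 := by
    rw [← pow_add]
    exact Even.neg_one_pow ⟨p, rfl⟩
  rw [hn, hp, pow_add, pow_add, h1]
  push_cast
  have hpi := Real.pi_ne_zero
  field_simp
  ring_nf
  rw [show p * 2 = 2 * p by ring, pow_mul]
  norm_num
  rfl
end

section
/- Let m, n be natural numbers with m ≥ 1 odd, set M := m − 2n, and assume M ≤ −1 (so M is a negative odd integer); set j₀ := (1 − M)/2. Let f : [0,∞) → ℝ be n times continuously differentiable such that: (a) for every j₀ ≤ j ≤ n, the function r ↦ r^{M+2j−1}·f^{(j)}(r²) is Lebesgue integrable on (0,∞); (b) for every j₀ ≤ j ≤ n−1, lim_{r→∞} r^{M+2j}·f^{(j)}(r²) = 0. Then (−1)^n · π^{−n} · ∫_{ℝ^m} f^{(n)}(|x|²) dx = 2 · (−1)^{j₀} · π^{−j₀} · ∫_0^∞ f^{(j₀)}(r²) dr. -/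
open MeasureTheory Filter Set

lemma gamma_nat_add_half' (k : ℕ) :
    Real.Gamma (k + 1/2) = Real.sqrt Real.pi * (2*k).factorial / (4^k * k.factorial) := by
  induction k with
  | zero => rw [show ((0:ℕ):ℝ) + 1/2 = 1/2 by norm_num, Real.Gamma_one_half_eq]; simp
  | succ k ih =>
    have h : ((k:ℝ) + 1) + 1/2 = (k + 1/2) + 1 := by ring
    rw [Nat.cast_succ, h, Real.Gamma_add_one (by positivity : (0:ℝ) < (k:ℝ) + 1/2).ne', ih]
    have h1 : (2*(k+1)).factorial = (2*k+2) * ((2*k+1) * (2*k).factorial) := by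
      rw [show 2*(k+1) = (2*k+1)+1 by ring, Nat.factorial_succ, Nat.factorial_succ]
    have h2 : (k+1).factorial = (k+1) * k.factorial := Nat.factorial_succ k
    rw [h1, h2]
    have h3 : (0:ℝ) < (k.factorial : ℝ) := by exact_mod_cast k.factorial_pos
    push_cast
    field_simp
    ring

/-- Theorem 3 ('dimensional reduction of Berezin integrals'), case `M = m − 2n ∈ −2ℕ−1`
(`m` odd, `j₀ = (1−M)/2`):
`(−1)^n π^{−n} ∫_{ℝ^m} f^{(n)}(|x|²) dx = 2 (−1)^{j₀} π^{−j₀} ∫_0^∞ f^{(j₀)}(r²) dr`. -/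
theorem stmt5 (m n j₀ : ℕ) (hm : 1 ≤ m) (hmo : Odd m)
    (hM : (m : ℤ) - 2 * n ≤ -1) (hj₀ : m + 2 * j₀ = 2 * n + 1)
    (f : ℝ → ℝ) (hf : ContDiffOn ℝ n f (Set.Ici 0))
    (hint : ∀ j : ℕ, j₀ ≤ j → j ≤ n → IntegrableOn
      (fun r : ℝ => r ^ ((m : ℤ) - 2 * n + 2 * j - 1) * iteratedDerivWithin j f (Set.Ici 0) (r ^ 2))
      (Set.Ioi 0))
    (hlim : ∀ j : ℕ, j₀ ≤ j → j < n → Tendsto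
      (fun r : ℝ => r ^ ((m : ℤ) - 2 * n + 2 * j) * iteratedDerivWithin j f (Set.Ici 0) (r ^ 2))
      atTop (nhds 0)) :
    ((-1 : ℝ) ^ n / Real.pi ^ n) *
        ∫ x : EuclideanSpace ℝ (Fin m), iteratedDerivWithin n f (Set.Ici 0) (‖x‖ ^ 2)
      = 2 * ((-1 : ℝ) ^ j₀ / Real.pi ^ j₀) *
          ∫ r in Set.Ioi (0 : ℝ), iteratedDerivWithin j₀ f (Set.Ici 0) (r ^ 2) := by
  have hj₀n : j₀ ≤ n := by omega
  set k := n - j₀ with hkdef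
  have hnk : n = j₀ + k := by omega
  have hm2 : m = 2*k + 1 := by omega
  set g : ℕ → ℝ → ℝ := fun j => iteratedDerivWithin j f (Set.Ici 0) with hg
  -- npow versions of hypotheses
  have hint' : ∀ j, j₀ ≤ j → j ≤ n →
      IntegrableOn (fun r : ℝ => r ^ (2*(j-j₀)) * g j (r^2)) (Ioi 0) := by
    intro j h1 h2
    have he : (m:ℤ) - 2*n + 2*j - 1 = ((2*(j-j₀) : ℕ) : ℤ) := by push_cast; omega
    have := hint j h1 h2
    rw [show (fun r : ℝ => r ^ ((m : ℤ) - 2 * n + 2 * j - 1) * iteratedDerivWithin j f (Set.Ici 0) (r ^ 2))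
        = fun r : ℝ => r ^ (2*(j-j₀)) * g j (r^2) from funext fun r => by
      rw [he, zpow_natCast]] at this
    exact this
  have hlim' : ∀ j, j₀ ≤ j → j < n →
      Tendsto (fun r : ℝ => r ^ (2*(j-j₀)+1) * g j (r^2)) atTop (nhds 0) := by
    intro j h1 h2
    have he : (m:ℤ) - 2*n + 2*j = ((2*(j-j₀)+1 : ℕ) : ℤ) := by push_cast; omega
    have := hlim j h1 h2
    rw [show (fun r : ℝ => r ^ ((m : ℤ) - 2 * n + 2 * j) * iteratedDerivWithin j f (Set.Ici 0) (r ^ 2))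
        = fun r : ℝ => r ^ (2*(j-j₀)+1) * g j (r^2) from funext fun r => by
      rw [he, zpow_natCast]] at this
    exact this
  have hcont : ∀ j, j ≤ n → ContinuousOn (g j) (Ici 0) := fun j hj =>
    hf.continuousOn_iteratedDerivWithin (by exact_mod_cast hj) (uniqueDiffOn_Ici 0)
  have hderiv : ∀ j, j < n → ∀ x : ℝ, 0 < x → HasDerivAt (g j) (g (j+1) x) x := by
    intro j hj x hx
    have hdiff : DifferentiableOn ℝ (g j) (Ici 0) :=
      hf.differentiableOn_iteratedDerivWithin (by exact_mod_cast hj) (uniqueDiffOn_Ici 0)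
    have h2 := ((hdiff x hx.le).hasDerivWithinAt).hasDerivAt (Ici_mem_nhds hx)
    rwa [show derivWithin (g j) (Ici 0) x = g (j+1) x from
      (congrFun iteratedDerivWithin_succ x).symm] at h2
  -- integration by parts step
  have key : ∀ j, j₀ ≤ j → j < n →
      (∫ r in Ioi (0:ℝ), r ^ (2*(j+1-j₀)) * g (j+1) (r^2))
        = -((2*(j-j₀)+1 : ℝ)/2) * ∫ r in Ioi (0:ℝ), r ^ (2*(j-j₀)) * g j (r^2) := by
    intro j h1 h2
    set s := j - j₀ with hsdef
    have hs1 : j + 1 - j₀ = s + 1 := by omega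
    set F : ℝ → ℝ := fun r => r ^ (2*s+1) * g j (r^2) with hF
    set F' : ℝ → ℝ := fun r =>
      (2*s+1 : ℝ) * (r ^ (2*s) * g j (r^2)) + 2 * (r ^ (2*s+2) * g (j+1) (r^2)) with hF'
    have hFderiv : ∀ r ∈ Ioi (0:ℝ), HasDerivAt F (F' r) r := by
      intro r hr
      have hr0 : (0:ℝ) < r := hr
      have hsq : HasDerivAt (fun r : ℝ => r^2) (2*r) r := by
        simpa using hasDerivAt_pow 2 r
      have hcomp : HasDerivAt (fun r : ℝ => g j (r^2)) (g (j+1) (r^2) * (2*r)) r :=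
        by have h := (hderiv j h2 (r^2) (by positivity)).comp r hsq; exact h
      have h3 := (hasDerivAt_pow (2*s+1) r).mul hcomp
      refine h3.congr_deriv ?_
      simp only [hF']
      push_cast
      ring
    have hFcontOn : ContinuousOn F (Ici 0) := by
      apply (continuous_pow _).continuousOn.mul
      exact (hcont j h2.le).comp (continuous_pow 2).continuousOn
        (fun x _ => sq_nonneg x)
    have hF0 : F 0 = 0 := by simp [hF]
    have hFtop : Tendsto F atTop (nhds 0) := hlim' j h1 h2
    have hint1 := hint' j h1 h2.le
    have hint2 : IntegrableOn (fun r : ℝ => r ^ (2*s+2) * g (j+1) (r^2)) (Ioi 0) := by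
      have := hint' (j+1) (by omega) h2
      rwa [show 2*(j+1-j₀) = 2*s+2 by omega] at this
    have hF'int : IntegrableOn F' (Ioi 0) :=
      (hint1.const_mul _).add (hint2.const_mul _)
    have heq := integral_Ioi_of_hasDerivAt_of_tendsto
      (hFcontOn 0 self_mem_Ici) hFderiv hF'int hFtop
    rw [hF0, sub_zero] at heq
    rw [hF'] at heq
    rw [integral_add (hint1.const_mul _) (hint2.const_mul _),
      integral_const_mul, integral_const_mul] at heq
    rw [← hsdef] at heq
    have hc : ((j:ℝ) - (j₀:ℝ)) = (s:ℝ) := by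
      rw [hsdef, Nat.cast_sub h1]
    rw [hs1, show 2*(s+1) = 2*s+2 by ring, hc]
    linarith
  -- iterate
  have main : ∀ i, i ≤ k → (∫ r in Ioi (0:ℝ), r ^ (2*i) * g (j₀+i) (r^2))
      = ((-1:ℝ)^i * (2*i).factorial / (4^i * i.factorial)) *
        ∫ r in Ioi (0:ℝ), g j₀ (r^2) := by
    intro i
    induction i with
    | zero => intro _; simp
    | succ i ih =>
      intro hik
      have h := key (j₀+i) (by omega) (by omega)
      rw [show j₀+i+1-j₀ = i+1 by omega, show j₀+i-j₀ = i by omega] at h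
      rw [show j₀+(i+1) = j₀+i+1 from rfl, h, ih (by omega), ← mul_assoc]
      congr 1
      have h1 : (2*(i+1)).factorial = (2*i+2) * ((2*i+1) * (2*i).factorial) := by
        rw [show 2*(i+1) = (2*i+1)+1 by ring, Nat.factorial_succ, Nat.factorial_succ]
      have h2 : (i+1).factorial = (i+1) * i.factorial := Nat.factorial_succ i
      rw [h1, h2]
      have h3 : (0:ℝ) < (i.factorial : ℝ) := by exact_mod_cast i.factorial_pos
      push_cast
      field_simp
      ring
  -- polar coordinates
  haveI : Nonempty (Fin m) := ⟨⟨0, hm⟩⟩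
  haveI : Nontrivial (EuclideanSpace ℝ (Fin m)) := by
    apply Module.nontrivial_of_finrank_pos (R := ℝ)
    rw [finrank_euclideanSpace_fin]
    omega
  have hpolar : (∫ x : EuclideanSpace ℝ (Fin m), g n (‖x‖^2))
      = (m:ℝ) * ((volume (Metric.ball (0 : EuclideanSpace ℝ (Fin m)) 1)).toReal *
          ∫ y in Ioi (0:ℝ), y ^ (m-1) * g n (y^2)) := by
    have := MeasureTheory.integral_fun_norm_addHaar
      (volume : Measure (EuclideanSpace ℝ (Fin m))) (fun r => g n (r^2))
    simp only [finrank_euclideanSpace_fin, smul_eq_mul, nsmul_eq_mul] at this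
    exact this
  have hball : (volume (Metric.ball (0 : EuclideanSpace ℝ (Fin m)) 1)).toReal
      = Real.pi^k * (4^(k+1) * ((k+1).factorial : ℝ)) / ((2*k+2).factorial : ℝ) := by
    rw [EuclideanSpace.volume_ball]
    have hcard : (Fintype.card (Fin m)) = m := Fintype.card_fin m
    rw [hcard]
    have hsp : (0:ℝ) < Real.sqrt Real.pi := Real.sqrt_pos.mpr Real.pi_pos
    have hgam : Real.Gamma ((m:ℝ)/2 + 1)
        = Real.sqrt Real.pi * ((2*(k+1)).factorial : ℝ) / (4^(k+1) * ((k+1).factorial : ℝ)) := by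
      rw [show (m:ℝ)/2 + 1 = ((k+1 : ℕ):ℝ) + 1/2 by rw [hm2]; push_cast; ring]
      exact gamma_nat_add_half' (k+1)
    rw [hgam]
    have hfac : (0:ℝ) < ((2*(k+1)).factorial : ℝ) := by exact_mod_cast Nat.factorial_pos _
    have hfac2 : (0:ℝ) < (((k+1)).factorial : ℝ) := by exact_mod_cast Nat.factorial_pos _
    have hsq : Real.sqrt Real.pi ^ m = Real.pi ^ k * Real.sqrt Real.pi := by
      rw [hm2, pow_succ, pow_mul, Real.sq_sqrt Real.pi_pos.le]
    rw [ENNReal.toReal_mul, ENNReal.toReal_pow, ENNReal.toReal_ofReal (by norm_num),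
      one_pow, one_mul, ENNReal.toReal_ofReal (by positivity), hsq,
      show 2*(k+1) = 2*k+2 by ring]
    field_simp
  -- put it together
  have hIn : (∫ y in Ioi (0:ℝ), y ^ (m-1) * g n (y^2))
      = ((-1:ℝ)^k * (2*k).factorial / (4^k * k.factorial)) *
        ∫ r in Ioi (0:ℝ), g j₀ (r^2) := by
    have := main k le_rfl
    rw [← hnk] at this
    rwa [show m - 1 = 2*k by omega]
  rw [show (fun x : EuclideanSpace ℝ (Fin m) => iteratedDerivWithin n f (Set.Ici 0) (‖x‖ ^ 2))
      = fun x : EuclideanSpace ℝ (Fin m) => g n (‖x‖^2) from rfl]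
  rw [hpolar, hball, hIn]
  set J := ∫ r in Ioi (0:ℝ), g j₀ (r^2) with hJ
  have hfac1 : (0:ℝ) < ((2*k).factorial : ℝ) := by exact_mod_cast Nat.factorial_pos _
  have hfac2 : (0:ℝ) < ((k).factorial : ℝ) := by exact_mod_cast Nat.factorial_pos _
  have h1 : ((2*k+2).factorial : ℝ) = (2*k+2) * ((2*k+1) * ((2*k).factorial : ℝ)) := by
    rw [show 2*k+2 = (2*k+1)+1 by ring, Nat.factorial_succ, Nat.factorial_succ]; push_cast; ring
  have h2 : ((k+1).factorial : ℝ) = (k+1) * (k.factorial : ℝ) := by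
    rw [Nat.factorial_succ]; push_cast; ring
  have hneg : ((-1:ℝ)^k) * ((-1:ℝ)^k) = 1 := by
    rw [← pow_add, ← two_mul, pow_mul]; norm_num
  have hpow : ((-1:ℝ)^n) = (-1:ℝ)^j₀ * (-1:ℝ)^k := by rw [hnk, pow_add]
  have hpip : Real.pi^n = Real.pi^j₀ * Real.pi^k := by rw [hnk, pow_add]
  rw [hpow, hpip, h1, h2, hm2]
  have hπ : (0:ℝ) < Real.pi := Real.pi_pos
  rcases Nat.even_or_odd k with hke | hko
  · rw [hke.neg_one_pow]
    push_cast
    field_simp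
    ring
  · rw [hko.neg_one_pow]
    push_cast
    field_simp
    ring
end

section
/- Let m be a natural number with m > 2 and let u : (0,∞) → ℝ be continuously differentiable. Suppose the functions r ↦ r^{m−1}·u′(r²) and r ↦ r^{m−3}·u(r²) are Lebesgue integrable on (0,∞) and that lim_{r→∞} r^{m−2}·u(r²) = 0. Then ∫_0^∞ r^{m−1}·u′(r²) dr = −((m−2)/2) · ∫_0^∞ r^{m−3}·u(r²) dr; in particular the boundary term at the origin vanishes automatically: lim_{r→0⁺} r^{m−2}·u(r²) = 0. -/
open MeasureTheory Filter Set

/-- The partial-integration step in the proof of Theorem 3: for `m > 2` and `u` continuously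
differentiable on `(0,∞)` with the stated integrability and decay at infinity,
`∫_0^∞ r^{m−1} u'(r²) dr = −((m−2)/2) ∫_0^∞ r^{m−3} u(r²) dr`, and the boundary term at the
origin vanishes: `lim_{r→0⁺} r^{m−2} u(r²) = 0`. -/
theorem stmt6 (m : ℕ) (hm : 2 < m) (u : ℝ → ℝ)
    (hu : ContDiffOn ℝ 1 u (Set.Ioi 0))
    (h1 : IntegrableOn (fun r : ℝ => r ^ (m - 1) * deriv u (r ^ 2)) (Set.Ioi 0))
    (h2 : IntegrableOn (fun r : ℝ => r ^ (m - 3) * u (r ^ 2)) (Set.Ioi 0))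
    (h3 : Tendsto (fun r : ℝ => r ^ (m - 2) * u (r ^ 2)) atTop (nhds 0)) :
    (∫ r in Set.Ioi (0 : ℝ), r ^ (m - 1) * deriv u (r ^ 2))
        = -(((m : ℝ) - 2) / 2) * ∫ r in Set.Ioi (0 : ℝ), r ^ (m - 3) * u (r ^ 2)
      ∧ Tendsto (fun r : ℝ => r ^ (m - 2) * u (r ^ 2)) (nhdsWithin 0 (Set.Ioi 0)) (nhds 0) := by
  set g : ℝ → ℝ := fun r => r ^ (m - 2) * u (r ^ 2) with hg
  set g' : ℝ → ℝ := fun r =>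
    ((m : ℝ) - 2) * (r ^ (m - 3) * u (r ^ 2)) + 2 * (r ^ (m - 1) * deriv u (r ^ 2)) with hg'
  -- derivative computation
  have hderiv : ∀ r ∈ Ioi (0 : ℝ), HasDerivAt g (g' r) r := by
    intro r hr
    have hr0 : (0 : ℝ) < r := hr
    have hr2 : (0 : ℝ) < r ^ 2 := by positivity
    have hud : DifferentiableAt ℝ u (r ^ 2) :=
      (hu.contDiffAt (Ioi_mem_nhds hr2)).differentiableAt one_ne_zero
    have hu' : HasDerivAt u (deriv u (r ^ 2)) (r ^ 2) := hud.hasDerivAt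
    have hsq : HasDerivAt (fun x : ℝ => x ^ 2) (2 * r) r := by
      simpa using hasDerivAt_pow 2 r
    have hu'' : HasDerivAt u (deriv u (r ^ 2)) ((fun x : ℝ => x ^ 2) r) := hu'
    have hcomp : HasDerivAt (fun x : ℝ => u (x ^ 2)) (deriv u (r ^ 2) * (2 * r)) r :=
      HasDerivAt.comp r hu'' hsq
    have hpow : HasDerivAt (fun x : ℝ => x ^ (m - 2)) (((m - 2 : ℕ) : ℝ) * r ^ (m - 3)) r := by
      have h32 : m - 2 - 1 = m - 3 := by omega
      simpa [h32] using hasDerivAt_pow (m - 2) r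
    have hmul : HasDerivAt g _ r := hpow.mul hcomp
    convert hmul using 1
    have hm1 : m - 1 = (m - 2) + 1 := by omega
    have hcast : ((m - 2 : ℕ) : ℝ) = (m : ℝ) - 2 := by
      push_cast [Nat.cast_sub (by omega : 2 ≤ m)]; ring
    simp only [hg', hcast, hm1, pow_succ]
    ring
  -- integrability of g'
  have hg'int : IntegrableOn g' (Ioi (0 : ℝ)) :=
    (h2.const_mul _).add (h1.const_mul 2)
  -- primitive is continuous
  have hII : IntegrableOn g' (Icc (0 : ℝ) 1) := by
    rw [integrableOn_Icc_iff_integrableOn_Ioc]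
    exact hg'int.mono_set Ioc_subset_Ioi_self
  have hprim : ContinuousOn (fun x => ∫ t in x..(1 : ℝ), g' t) (Icc (0 : ℝ) 1) := by
    have := intervalIntegral.continuousOn_primitive_interval_left (a := 0) (b := 1)
      (f := g') (μ := volume) (by rwa [uIcc_of_le (by norm_num : (0:ℝ) ≤ 1)])
    simpa [uIcc_of_le (by norm_num : (0:ℝ) ≤ 1)] using this
  -- FTC on [x,1]
  have hftc : ∀ x ∈ Ioi (0 : ℝ), g x = g 1 - ∫ t in x..(1 : ℝ), g' t := by
    intro x hx
    have hx0 : (0 : ℝ) < x := hx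
    have hsub : uIcc x 1 ⊆ Ioi (0 : ℝ) := by
      intro t ht
      have h1t := ht.1
      have hmin : (0 : ℝ) < min x 1 := lt_min hx0 one_pos
      exact lt_of_lt_of_le hmin h1t
    have hint : IntervalIntegrable g' volume x 1 := by
      rw [intervalIntegrable_iff]
      exact hg'int.mono_set ((Set.uIoc_subset_uIcc).trans hsub)
    have := intervalIntegral.integral_eq_sub_of_hasDerivAt
      (fun t ht => hderiv t (hsub ht)) hint
    rw [this]; ring
  set L : ℝ := g 1 - ∫ t in (0 : ℝ)..1, g' t with hL
  have htend0 : Tendsto g (nhdsWithin 0 (Ioi 0)) (nhds L) := by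
    have h0mem : (0 : ℝ) ∈ Icc (0 : ℝ) 1 := by norm_num
    have hcw : Tendsto (fun x => ∫ t in x..(1 : ℝ), g' t) (nhdsWithin 0 (Icc (0 : ℝ) 1))
        (nhds (∫ t in (0 : ℝ)..1, g' t)) := hprim 0 h0mem
    have hcw' : Tendsto (fun x => ∫ t in x..(1 : ℝ), g' t) (nhdsWithin 0 (Ioi (0 : ℝ)))
        (nhds (∫ t in (0 : ℝ)..1, g' t)) := by
      refine hcw.mono_left ?_
      rw [← nhdsWithin_Ioc_eq_nhdsGT (by norm_num : (0:ℝ) < 1)]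
      exact nhdsWithin_mono _ Ioc_subset_Icc_self
    have htmp : Tendsto (fun x => g 1 - ∫ t in x..(1 : ℝ), g' t) (nhdsWithin 0 (Ioi (0 : ℝ)))
        (nhds L) := tendsto_const_nhds.sub hcw'
    refine htmp.congr' ?_
    filter_upwards [self_mem_nhdsWithin] with x hx
    exact (hftc x hx).symm
  -- the limit at 0 is 0
  have hL0 : L = 0 := by
    by_contra hLne
    have hc : (0 : ℝ) < |L| / 2 := by positivity
    have hev : ∀ᶠ x in nhdsWithin 0 (Ioi (0:ℝ)), |L| / 2 ≤ |g x| := by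
      have hball := htend0 (Metric.ball_mem_nhds L hc)
      filter_upwards [hball] with x hx
      simp only [Set.mem_preimage, Metric.mem_ball] at hx
      rw [Real.dist_eq] at hx
      have h1 := abs_sub_abs_le_abs_sub L (g x)
      have h2' : |L - g x| < |L| / 2 := by rwa [abs_sub_comm]
      linarith
    rw [eventually_nhdsWithin_iff] at hev
    rcases Metric.eventually_nhds_iff.1 hev with ⟨δ, hδ, hδev⟩
    set ε : ℝ := min δ 1 with hε
    have hε0 : (0 : ℝ) < ε := lt_min hδ one_pos
    have hbound : ∀ x ∈ Ioo (0 : ℝ) ε, |L| / 2 * x⁻¹ ≤ |x ^ (m - 3) * u (x ^ 2)| := by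
      intro x hx
      have hx0 : (0 : ℝ) < x := hx.1
      have hxδ : dist x 0 < δ := by
        rw [Real.dist_eq, sub_zero, abs_of_pos hx0]
        exact hx.2.trans_le (min_le_left _ _)
      have hgx : |L| / 2 ≤ |g x| := hδev hxδ hx.1
      have hid : x ^ (m - 3) * u (x ^ 2) = g x * x⁻¹ := by
        have hm2 : m - 2 = (m - 3) + 1 := by omega
        rw [hg]
        simp only [hm2, pow_succ]
        field_simp
      rw [hid, abs_mul, abs_of_pos (inv_pos.2 hx0)]
      exact mul_le_mul_of_nonneg_right hgx (le_of_lt (inv_pos.2 hx0))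
    have hintc : IntegrableOn (fun x : ℝ => |L| / 2 * x⁻¹) (Ioo 0 ε) := by
      refine Integrable.mono' ((h2.mono_set Ioo_subset_Ioi_self).norm)
        ((measurable_const.mul measurable_inv).aestronglyMeasurable) ?_
      rw [ae_restrict_iff' measurableSet_Ioo]
      filter_upwards with x hx
      have hx0 : (0 : ℝ) < x := hx.1
      rw [Real.norm_eq_abs, abs_mul, abs_of_pos hc, abs_of_pos (inv_pos.2 hx0),
        Real.norm_eq_abs]
      exact hbound x hx
    have hinv : IntegrableOn (fun x : ℝ => x⁻¹) (Ioo (0:ℝ) ε) := by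
      have h' : IntegrableOn (fun x : ℝ => (|L| / 2)⁻¹ * (|L| / 2 * x⁻¹)) (Ioo 0 ε) :=
        hintc.const_mul ((|L| / 2)⁻¹)
      refine h'.congr_fun ?_ measurableSet_Ioo
      intro x _
      show (|L| / 2)⁻¹ * (|L| / 2 * x⁻¹) = x⁻¹
      rw [← mul_assoc, inv_mul_cancel₀ (ne_of_gt hc), one_mul]
    have : IntegrableOn (fun x : ℝ => x ^ (-1 : ℝ)) (Ioo (0:ℝ) ε) := by
      refine hinv.congr_fun ?_ measurableSet_Ioo
      intro x hx
      show x⁻¹ = x ^ (-1 : ℝ)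
      rw [Real.rpow_neg_one]
    have := (intervalIntegral.integrableOn_Ioo_rpow_iff hε0).1 this
    linarith
  -- continuity at 0 from the right, with g 0 = 0
  have hg0 : g 0 = 0 := by
    rw [hg]
    simp [zero_pow (by omega : m - 2 ≠ 0)]
  have htend0' : Tendsto g (nhdsWithin 0 (Ioi 0)) (nhds 0) := hL0 ▸ htend0
  have hcont : ContinuousWithinAt g (Ici (0:ℝ)) 0 := by
    rw [ContinuousWithinAt, hg0, ← Set.Ioi_insert, nhdsWithin_insert]
    exact Tendsto.sup (by simpa [hg0] using tendsto_pure_nhds g 0) htend0'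
  have hkey : ∫ x in Ioi (0:ℝ), g' x = 0 - g 0 :=
    integral_Ioi_of_hasDerivAt_of_tendsto hcont hderiv hg'int h3
  rw [hg0, sub_zero] at hkey
  have hsplit : ∫ x in Ioi (0:ℝ), g' x
      = ((m : ℝ) - 2) * (∫ r in Ioi (0:ℝ), r ^ (m - 3) * u (r ^ 2))
        + 2 * (∫ r in Ioi (0:ℝ), r ^ (m - 1) * deriv u (r ^ 2)) := by
    rw [hg']
    rw [integral_add (h2.const_mul _) (h1.const_mul 2), integral_const_mul, integral_const_mul]
  constructor
  · rw [hsplit] at hkey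
    have hhalf : (2 : ℝ) ≠ 0 := two_ne_zero
    field_simp
    linarith
  · exact htend0'
end

section
/- Let f : [0,∞) → ℝ be continuously differentiable with lim_{v→∞} f(v²) = 0 and such that the function v ↦ (1+v)·v·f′(v²) is Lebesgue integrable on (0,∞). Then lim_{ε→0⁺} (2·π^{ε/2}/Γ(ε/2)) · ∫_0^∞ v^{ε−1}·f(v²) dv = f(0), where Γ denotes the Gamma function. -/
open MeasureTheory Filter Set

/-- The regularized dimensional-continuation formula for super-dimension `M = 0`:
`lim_{ε→0⁺} (2 π^{ε/2} / Γ(ε/2)) ∫_0^∞ v^{ε−1} f(v²) dv = f(0)`. -/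
theorem stmt7 (f : ℝ → ℝ) (hf : ContDiffOn ℝ 1 f (Set.Ici 0))
    (hlim : Tendsto (fun v : ℝ => f (v ^ 2)) atTop (nhds 0))
    (hint : IntegrableOn
      (fun v : ℝ => (1 + v) * v * derivWithin f (Set.Ici 0) (v ^ 2)) (Set.Ioi 0)) :
    Tendsto (fun ε : ℝ => 2 * Real.pi ^ (ε / 2) / Real.Gamma (ε / 2) *
        ∫ v in Set.Ioi (0 : ℝ), v ^ (ε - 1) * f (v ^ 2))
      (nhdsWithin 0 (Set.Ioi 0)) (nhds (f 0)) := by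
  set φ : ℝ → ℝ := fun v => derivWithin f (Set.Ici 0) (v ^ 2) with hφdef
  set g : ℝ → ℝ := fun v => f (v ^ 2) with hgdef
  have hfc : ContinuousOn f (Ici 0) := hf.continuousOn
  have hgc : ContinuousOn g (Ici 0) :=
    hfc.comp ((continuous_pow 2).continuousOn) (fun x _ => mem_Ici.mpr (sq_nonneg x))
  have hφeq : ∀ v : ℝ, v ≠ 0 → φ v = deriv f (v ^ 2) := by
    intro v hv
    exact derivWithin_of_mem_nhds (Ici_mem_nhds (by positivity))
  have hgderiv : ∀ v ∈ Ioi (0 : ℝ), HasDerivAt g (2 * v * φ v) v := by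
    intro v hv
    have hv' : (0 : ℝ) < v := hv
    have hv2 : (0 : ℝ) < v ^ 2 := by positivity
    have hmem : Ici (0 : ℝ) ∈ nhds (v ^ 2) := Ici_mem_nhds hv2
    have hdf : DifferentiableAt ℝ f (v ^ 2) :=
      ((hf.differentiableOn one_ne_zero) (v ^ 2) (mem_Ici.mpr hv2.le)).differentiableAt hmem
    have h1 : HasDerivAt f (φ v) (v ^ 2) := by
      rw [hφeq v hv'.ne']
      exact hdf.hasDerivAt
    have h2 : HasDerivAt (fun w : ℝ => w ^ 2) (2 * v) v := by
      simpa using hasDerivAt_pow 2 v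
    have h3 : HasDerivAt (f ∘ fun w : ℝ => w ^ 2) (φ v * (2 * v)) v :=
      HasDerivAt.comp v h1 h2
    have h4 : HasDerivAt g (φ v * (2 * v)) v := h3
    simpa [mul_comm, mul_assoc, mul_left_comm] using h4
  have hφm : AEStronglyMeasurable (fun v => 2 * v * φ v) (volume.restrict (Ioi 0)) := by
    have hm : Measurable (fun v : ℝ => 2 * v * deriv f (v ^ 2)) :=
      (measurable_const.mul measurable_id).mul ((measurable_deriv f).comp (measurable_id.pow_const 2))
    refine hm.aestronglyMeasurable.congr ?_
    filter_upwards [ae_restrict_mem measurableSet_Ioi] with v hv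
    rw [hφeq v (ne_of_gt hv)]
  have h2vφ_int : IntegrableOn (fun v => 2 * v * φ v) (Ioi 0) := by
    apply Integrable.mono' (hint.norm.const_mul 2) hφm
    filter_upwards [ae_restrict_mem measurableSet_Ioi] with v hv
    have hv' : (0 : ℝ) < v := hv
    simp only [Real.norm_eq_abs, abs_mul]
    have h1 : (1 : ℝ) ≤ |1 + v| := by rw [abs_of_pos (by linarith)]; linarith
    have := abs_nonneg v
    have := abs_nonneg (φ v)
    have h2 : |(2 : ℝ)| = 2 := by norm_num
    have h3 : |derivWithin f (Ici 0) (v ^ 2)| = |φ v| := rfl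
    rw [h3, h2]
    nlinarith [mul_le_mul_of_nonneg_right h1 (mul_nonneg (abs_nonneg v) (abs_nonneg (φ v)))]
  have hFTC : ∀ a : ℝ, 0 ≤ a → ∫ v in Ioi a, 2 * v * φ v = -g a := by
    intro a ha
    have h := integral_Ioi_of_hasDerivAt_of_tendsto
      ((hgc a (mem_Ici.mpr ha)).mono (Ici_subset_Ici.mpr ha))
      (fun x hx => hgderiv x (lt_of_le_of_lt ha hx))
      (h2vφ_int.mono_set (Ioi_subset_Ioi ha)) hlim
    rw [h, zero_sub]
  set C : ℝ := ∫ t in Ioi (0 : ℝ), ‖(1 + t) * t * φ t‖ with hCdef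
  have hC0 : 0 ≤ C := integral_nonneg fun t => norm_nonneg _
  have hgbound : ∀ v : ℝ, 0 < v → |g v| ≤ 2 * C / v := by
    intro v hv
    have h1 : g v = -∫ t in Ioi v, 2 * t * φ t := by rw [hFTC v hv.le, neg_neg]
    rw [h1, abs_neg]
    have h2 : |∫ t in Ioi v, 2 * t * φ t| ≤ ∫ t in Ioi v, ‖2 * t * φ t‖ := by
      simpa [Real.norm_eq_abs] using
        norm_integral_le_integral_norm (μ := volume.restrict (Ioi v)) (fun t => 2 * t * φ t)
    refine h2.trans ?_
    have h3 : ∫ t in Ioi v, ‖2 * t * φ t‖ ≤ ∫ t in Ioi v, 2 / v * ‖(1 + t) * t * φ t‖ := by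
      apply setIntegral_mono_on
      · exact (h2vφ_int.mono_set (Ioi_subset_Ioi hv.le)).norm
      · exact ((IntegrableOn.mono_set hint.norm (Ioi_subset_Ioi hv.le)).const_mul _)
      · exact measurableSet_Ioi
      · intro t ht
        have htv : v < t := ht
        simp only [Real.norm_eq_abs, abs_mul]
        have ht0 : (0 : ℝ) < t := hv.trans htv
        have h4 : |(2 : ℝ)| = 2 := by norm_num
        have h5 : |1 + t| = 1 + t := abs_of_pos (by linarith)
        have h6 : |t| = t := abs_of_pos ht0
        have h7 : |derivWithin f (Ici 0) (t ^ 2)| = |φ t| := rfl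
        rw [h4, h5, h6, h7, div_mul_eq_mul_div, le_div_iff₀ hv]
        nlinarith [abs_nonneg (φ t), mul_nonneg ht0.le (abs_nonneg (φ t))]
    refine h3.trans ?_
    rw [integral_const_mul]
    have h8 : ∫ t in Ioi v, ‖(1 + t) * t * φ t‖ ≤ C := by
      apply setIntegral_mono_set hint.norm
      · exact Eventually.of_forall fun t => norm_nonneg _
      · exact HasSubset.Subset.eventuallyLE (Ioi_subset_Ioi hv.le)
    calc 2 / v * ∫ t in Ioi v, ‖(1 + t) * t * φ t‖ ≤ 2 / v * C := by
          exact mul_le_mul_of_nonneg_left h8 (by positivity)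
      _ = 2 * C / v := by ring
  obtain ⟨M, hM⟩ : ∃ M, ∀ v ∈ Icc (0 : ℝ) 1, ‖g v‖ ≤ M :=
    isCompact_Icc.exists_bound_of_continuousOn (hgc.mono (Icc_subset_Ici_self))
  have hI2meas : ∀ ε : ℝ, AEStronglyMeasurable (fun v => v ^ ε * (2 * v * φ v))
      (volume.restrict (Ioi 0)) := by
    intro ε
    exact ((measurable_id.pow_const ε).aestronglyMeasurable.mono_measure
      Measure.restrict_le_self).mul hφm
  have hI2bnd : ∀ ε : ℝ, ε ∈ Ioc (0 : ℝ) 1 →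
      ∀ᵐ v ∂(volume.restrict (Ioi (0 : ℝ))),
        ‖v ^ ε * (2 * v * φ v)‖ ≤ 2 * ‖(1 + v) * v * φ v‖ := by
    intro ε hε
    filter_upwards [ae_restrict_mem measurableSet_Ioi] with v hv
    have hv' : (0 : ℝ) < v := hv
    have hvε : v ^ ε ≤ 1 + v := by
      rcases le_total v 1 with h | h
      · have := Real.rpow_le_one hv'.le h hε.1.le
        linarith
      · have := Real.rpow_le_rpow_of_exponent_le h hε.2
        rw [Real.rpow_one] at this
        linarith
    have hvε0 : (0 : ℝ) ≤ v ^ ε := Real.rpow_nonneg hv'.le ε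
    simp only [Real.norm_eq_abs, abs_mul]
    have h4 : |(2 : ℝ)| = 2 := by norm_num
    have h5 : |1 + v| = 1 + v := abs_of_pos (by linarith)
    have h6 : |v| = v := abs_of_pos hv'
    have h7 : |v ^ ε| = v ^ ε := abs_of_nonneg hvε0
    rw [h4, h5, h6, h7]
    nlinarith [abs_nonneg (φ v), mul_nonneg hv'.le (abs_nonneg (φ v))]
  have hI2int : ∀ ε : ℝ, ε ∈ Ioc (0 : ℝ) 1 →
      IntegrableOn (fun v => v ^ ε * (2 * v * φ v)) (Ioi 0) := by
    intro ε hε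
    exact Integrable.mono' (hint.norm.const_mul 2) (hI2meas ε) (hI2bnd ε hε)
  have hI1int : ∀ ε : ℝ, ε ∈ Ioo (0 : ℝ) 1 →
      IntegrableOn (fun v => v ^ (ε - 1) * g v) (Ioi 0) := by
    intro ε hε
    rw [← Ioc_union_Ioi_eq_Ioi (zero_le_one)]
    apply IntegrableOn.union
    · apply Integrable.mono'
        ((Iff.mpr integrableOn_Ioc_iff_integrableOn_Ioo
          ((intervalIntegral.integrableOn_Ioo_rpow_iff zero_lt_one).mpr (by linarith [hε.1] : (-1 : ℝ) < ε - 1))).const_mul M)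
      · apply AEStronglyMeasurable.mul
        · exact (measurable_id.pow_const (ε - 1)).aestronglyMeasurable.mono_measure
            Measure.restrict_le_self
        · exact (hgc.mono (Ioc_subset_Icc_self.trans (Icc_subset_Ici_self))).aestronglyMeasurable
            measurableSet_Ioc
      · filter_upwards [ae_restrict_mem measurableSet_Ioc] with v hv
        have hv0 : (0 : ℝ) < v := hv.1
        have h7 : (0 : ℝ) ≤ v ^ (ε - 1) := Real.rpow_nonneg hv0.le _
        rw [Real.norm_eq_abs, abs_mul, abs_of_nonneg h7, mul_comm M]
        exact mul_le_mul_of_nonneg_left (hM v ⟨hv0.le, hv.2⟩) h7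
    · apply Integrable.mono'
        ((integrableOn_Ioi_rpow_of_lt (by linarith [hε.2] : ε - 2 < -1) zero_lt_one).const_mul (2 * C))
      · apply AEStronglyMeasurable.mul
        · exact (measurable_id.pow_const (ε - 1)).aestronglyMeasurable.mono_measure
            Measure.restrict_le_self
        · refine (hgc.mono ?_).aestronglyMeasurable measurableSet_Ioi
          exact fun x hx => mem_Ici.mpr (le_of_lt (lt_trans zero_lt_one (show (1:ℝ) < x from hx)))
      · filter_upwards [ae_restrict_mem measurableSet_Ioi] with v hv
        have hv1 : (1 : ℝ) < v := hv
        have hv0 : (0 : ℝ) < v := lt_trans zero_lt_one hv1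
        have h7 : (0 : ℝ) ≤ v ^ (ε - 1) := Real.rpow_nonneg hv0.le _
        rw [Real.norm_eq_abs, abs_mul, abs_of_nonneg h7]
        calc v ^ (ε - 1) * |g v| ≤ v ^ (ε - 1) * (2 * C / v) :=
              mul_le_mul_of_nonneg_left (hgbound v hv0) h7
          _ = 2 * C * v ^ (ε - 2) := by
              rw [show ε - 2 = ε - 1 + -1 by ring, Real.rpow_add hv0, Real.rpow_neg_one]
              ring
  have hIBP : ∀ ε : ℝ, ε ∈ Ioo (0 : ℝ) 1 →
      ε * ∫ v in Ioi (0 : ℝ), v ^ (ε - 1) * g v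
        = -∫ v in Ioi (0 : ℝ), v ^ ε * (2 * v * φ v) := by
    intro ε hε
    have hε01 : ε ∈ Ioc (0 : ℝ) 1 := ⟨hε.1, hε.2.le⟩
    have hd : ∀ v ∈ Ioi (0 : ℝ),
        HasDerivAt (fun w => w ^ ε * g w)
          (ε * (v ^ (ε - 1) * g v) + v ^ ε * (2 * v * φ v)) v := by
      intro v hv
      have hv' : (0 : ℝ) < v := hv
      have h1 : HasDerivAt (fun w : ℝ => w ^ ε) (ε * v ^ (ε - 1)) v :=
        Real.hasDerivAt_rpow_const (Or.inl hv'.ne')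
      have := h1.mul (hgderiv v hv)
      rw [show ε * (v ^ (ε - 1) * g v) = ε * v ^ (ε - 1) * g v by ring]
      exact this
    have hFint : IntegrableOn
        (fun v => ε * (v ^ (ε - 1) * g v) + v ^ ε * (2 * v * φ v)) (Ioi 0) :=
      ((hI1int ε hε).const_mul ε).add (hI2int ε hε01)
    have hcont0 : ContinuousWithinAt (fun w : ℝ => w ^ ε * g w) (Ici 0) 0 := by
      apply ContinuousWithinAt.mul
      · exact (Real.continuousAt_rpow_const 0 ε (Or.inr hε.1.le)).continuousWithinAt
      · exact hgc 0 (mem_Ici.mpr le_rfl)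
    have htop : Tendsto (fun w : ℝ => w ^ ε * g w) atTop (nhds 0) := by
      apply squeeze_zero_norm' (a := fun v : ℝ => 2 * C * v ^ (ε - 1)) ?_ ?_
      · filter_upwards [eventually_gt_atTop (0 : ℝ)] with v hv
        have hvε0 : (0 : ℝ) ≤ v ^ ε := Real.rpow_nonneg hv.le ε
        rw [Real.norm_eq_abs, abs_mul, abs_of_nonneg hvε0]
        calc v ^ ε * |g v| ≤ v ^ ε * (2 * C / v) :=
              mul_le_mul_of_nonneg_left (hgbound v hv) hvε0
          _ = 2 * C * v ^ (ε - 1) := by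
              rw [show ε - 1 = ε + -1 by ring, Real.rpow_add hv, Real.rpow_neg_one]
              ring
      · have h2 : Tendsto (fun v : ℝ => v ^ (ε - 1)) atTop (nhds 0) := by
          have := tendsto_rpow_neg_atTop (show (0 : ℝ) < 1 - ε by linarith [hε.2])
          simpa [show -(1 - ε) = ε - 1 by ring] using this
        simpa using h2.const_mul (2 * C)
    have h0 := integral_Ioi_of_hasDerivAt_of_tendsto hcont0 hd hFint htop
    rw [Real.zero_rpow hε.1.ne', zero_mul, zero_sub, neg_zero] at h0
    rw [integral_add ((hI1int ε hε).const_mul ε) (hI2int ε hε01), integral_const_mul] at h0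
    linarith [h0]
  have hI2t : Tendsto (fun ε : ℝ => ∫ v in Ioi (0 : ℝ), v ^ ε * (2 * v * φ v))
      (nhdsWithin 0 (Ioi 0)) (nhds (-f 0)) := by
    have h00 : ∫ v in Ioi (0 : ℝ), 2 * v * φ v = -f 0 := by
      have h01 := hFTC 0 le_rfl
      have h02 : g 0 = f 0 := by simp [hgdef]
      rw [h01, h02]
    have := tendsto_integral_filter_of_dominated_convergence
      (μ := volume.restrict (Ioi (0 : ℝ))) (l := nhdsWithin (0 : ℝ) (Ioi 0))
      (F := fun ε v => v ^ ε * (2 * v * φ v)) (f := fun v => 2 * v * φ v)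
      (bound := fun v => 2 * ‖(1 + v) * v * φ v‖)
      (Eventually.of_forall hI2meas)
      ?_ (hint.norm.const_mul 2) ?_
    · rwa [h00] at this
    · filter_upwards [Ioc_mem_nhdsGT zero_lt_one] with ε hε
      exact hI2bnd ε hε
    · filter_upwards [ae_restrict_mem measurableSet_Ioi] with v hv
      have hv' : (0 : ℝ) < v := hv
      have h1 : Tendsto (fun ε : ℝ => v ^ ε) (nhds 0) (nhds 1) := by
        have := (Real.continuousAt_const_rpow (a := v) (b := 0) hv'.ne').tendsto
        simpa [Real.rpow_zero] using this
      have := (h1.mono_left (nhdsWithin_le_nhds (s := Ioi (0:ℝ)))).mul_const (2 * v * φ v)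
      simpa using this
  have hπ : Tendsto (fun ε : ℝ => Real.pi ^ (ε / 2)) (nhdsWithin 0 (Ioi 0)) (nhds 1) := by
    have h1 : ContinuousAt (fun x : ℝ => Real.pi ^ x) 0 :=
      Real.continuousAt_const_rpow Real.pi_ne_zero
    have h2 : Tendsto (fun ε : ℝ => ε / 2) (nhds (0 : ℝ)) (nhds 0) := by
      simpa using (tendsto_id (x := nhds (0:ℝ))).div_const 2
    have := (h1.tendsto.comp h2).mono_left (nhdsWithin_le_nhds (s := Ioi (0:ℝ)))
    simpa [Function.comp_def, Real.rpow_zero] using this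
  have hΓ : Tendsto (fun ε : ℝ => Real.Gamma (ε / 2 + 1)) (nhdsWithin 0 (Ioi 0)) (nhds 1) := by
    have h1 : ContinuousAt Real.Gamma 1 := by
      refine (Real.differentiableAt_Gamma fun m => ?_).continuousAt
      have h0 : (0 : ℝ) ≤ m := Nat.cast_nonneg m
      intro hcon
      have h1 : (1 : ℝ) = -m := hcon
      linarith
    have h2 : Tendsto (fun ε : ℝ => ε / 2 + 1) (nhds (0 : ℝ)) (nhds 1) := by
      have := (tendsto_id (x := nhds (0:ℝ))).div_const 2
      have h3 := this.add_const 1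
      simpa using h3
    have := (h1.tendsto.comp h2).mono_left (nhdsWithin_le_nhds (s := Ioi (0:ℝ)))
    simpa [Function.comp_def, Real.Gamma_one] using this
  have hfinal : Tendsto (fun ε : ℝ =>
      Real.pi ^ (ε / 2) * -(∫ v in Ioi (0 : ℝ), v ^ ε * (2 * v * φ v)) / Real.Gamma (ε / 2 + 1))
      (nhdsWithin 0 (Ioi 0)) (nhds (f 0)) := by
    have := (hπ.mul hI2t.neg).div hΓ one_ne_zero
    simpa [Pi.div_def] using this
  refine Tendsto.congr' ?_ hfinal
  filter_upwards [Ioo_mem_nhdsGT_of_mem (by exact ⟨le_refl 0, zero_lt_one⟩ : (0:ℝ) ∈ Ico 0 1)]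
    with ε hε
  have hε0 : (0 : ℝ) < ε := hε.1
  have hΓpos : (0 : ℝ) < Real.Gamma (ε / 2) := Real.Gamma_pos_of_pos (by linarith)
  have hΓadd : Real.Gamma (ε / 2 + 1) = ε / 2 * Real.Gamma (ε / 2) :=
    Real.Gamma_add_one (by positivity)
  have hibp := hIBP ε hε
  rw [hΓadd, ← hibp]
  field_simp
  ring
end

section
/- Let M be a real number and l ≥ 1 an integer. Define the radial Laplace operator L_M acting on twice-differentiable functions φ of one variable r ∈ (0,∞) by (L_M φ)(r) = φ″(r) + ((M−1)/r)·φ′(r). Then the l-fold iterate of L_M annihilates the power function r ↦ r^{2l−M} on (0,∞): (L_M)^l ( r^{2l−M} ) = 0 for all r > 0. -/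
/-- The radial Laplace operator in (super-)dimension `M`:
`(L_M φ)(r) = φ″(r) + ((M−1)/r) φ′(r)`. -/
noncomputable def radLap (M : ℝ) (φ : ℝ → ℝ) : ℝ → ℝ :=
  fun r => deriv (deriv φ) r + ((M - 1) / r) * deriv φ r

open Set Filter

lemma deriv_congr_Ioi {f g : ℝ → ℝ} (h : ∀ s ∈ Set.Ioi (0:ℝ), f s = g s)
    {r : ℝ} (hr : 0 < r) : deriv f r = deriv g r := by
  apply Filter.EventuallyEq.deriv_eq
  filter_upwards [Ioi_mem_nhds hr] using h

lemma deriv_cmul_rpow (c α : ℝ) {r : ℝ} (hr : 0 < r) :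
    deriv (fun s : ℝ => c * s ^ α) r = c * α * r ^ (α - 1) := by
  have h : HasDerivAt (fun s : ℝ => s ^ α) (α * r ^ (α - 1)) r :=
    Real.hasDerivAt_rpow_const (Or.inl hr.ne')
  rw [(h.const_mul c).deriv]; ring

lemma radLap_congr_Ioi {M : ℝ} {f g : ℝ → ℝ} (h : ∀ s ∈ Set.Ioi (0:ℝ), f s = g s)
    {r : ℝ} (hr : 0 < r) : radLap M f r = radLap M g r := by
  have hd : ∀ s ∈ Set.Ioi (0:ℝ), deriv f s = deriv g s :=
    fun s hs => deriv_congr_Ioi h hs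
  unfold radLap
  rw [deriv_congr_Ioi hd hr, hd r hr]

lemma radLap_cmul_rpow (M c α : ℝ) {r : ℝ} (hr : 0 < r) :
    radLap M (fun s : ℝ => c * s ^ α) r = c * α * (α + M - 2) * r ^ (α - 2) := by
  have h1 : deriv (deriv (fun s : ℝ => c * s ^ α)) r
      = c * α * (α - 1) * r ^ (α - 1 - 1) := by
    rw [deriv_congr_Ioi (fun s hs => deriv_cmul_rpow c α hs) hr]
    exact deriv_cmul_rpow (c * α) (α - 1) hr
  have e1 : r ^ (α - 1 - 1) = r ^ (α - 2) := by congr 1; ring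
  have e2 : r ^ (α - 1) = r ^ (α - 2) * r := by
    rw [show α - 1 = (α - 2) + 1 by ring, Real.rpow_add hr, Real.rpow_one]
  unfold radLap
  rw [h1, deriv_cmul_rpow c α hr, e1, e2]
  field_simp
  ring

/-- Coefficients appearing in iterated application of `radLap`. -/
noncomputable def coef (M α : ℝ) : ℕ → ℝ
  | 0 => 1
  | k + 1 => coef M α k * (α - 2 * k) * (α - 2 * k + M - 2)

lemma iterate_radLap_rpow (M α : ℝ) (k : ℕ) :
    ∀ r : ℝ, 0 < r →
      (radLap M)^[k] (fun s : ℝ => s ^ α) r = coef M α k * r ^ (α - 2 * k) := by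
  induction k with
  | zero => intro r hr; simp [coef]
  | succ k ih =>
    intro r hr
    rw [Function.iterate_succ_apply']
    have hF : ∀ s ∈ Set.Ioi (0:ℝ),
        (radLap M)^[k] (fun s : ℝ => s ^ α) s
          = (fun s : ℝ => coef M α k * s ^ (α - 2 * k)) s := fun s hs => ih s hs
    rw [radLap_congr_Ioi hF hr, radLap_cmul_rpow M _ _ hr, coef]
    push_cast
    ring_nf

/-- The radial computation in Theorem 5 ('fundamental solutions'): the `l`-fold iterate of
the radial Laplace operator `L_M` annihilates `r ↦ r^{2l−M}` on `(0,∞)`. -/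
theorem stmt10 (M : ℝ) (l : ℕ) (hl : 1 ≤ l) :
    ∀ r : ℝ, 0 < r → (radLap M)^[l] (fun s : ℝ => s ^ (2 * (l : ℝ) - M)) r = 0 := by
  intro r hr
  obtain ⟨m, rfl⟩ : ∃ m, l = m + 1 := ⟨l - 1, (Nat.succ_pred_eq_of_pos hl).symm⟩
  rw [iterate_radLap_rpow _ _ _ r hr, coef]
  have : (2 * ((m : ℝ) + 1) - M) - 2 * m + M - 2 = 0 := by ring
  push_cast
  rw [show (2 * ((m : ℝ) + 1) - M) - 2 * m + M - 2 = 0 by ring]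
  ring
end

section
/- Let M be a positive even integer and l ≥ M/2 an integer with l ≥ 1. Define the radial Laplace operator L_M acting on twice-differentiable functions φ of one variable r ∈ (0,∞) by (L_M φ)(r) = φ″(r) + ((M−1)/r)·φ′(r). Then (L_M)^l ( r^{2l−M}·log r ) = 0 for all r > 0. -/
/-- Auxiliary family: `F a c d r = c r^a log r + d r^a`. -/
noncomputable def Faux (a c d : ℝ) : ℝ → ℝ :=
  fun r => c * r ^ a * Real.log r + d * r ^ a

lemma Faux_hasDerivAt (a c d : ℝ) {r : ℝ} (hr : 0 < r) :
    HasDerivAt (Faux a c d) (Faux (a - 1) (c * a) (c + d * a) r) r := by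
  have h1 : HasDerivAt (fun x : ℝ => x ^ a) (a * r ^ (a - 1)) r :=
    Real.hasDerivAt_rpow_const (Or.inl hr.ne')
  have h2 : HasDerivAt Real.log r⁻¹ r := Real.hasDerivAt_log hr.ne'
  have h := ((h1.const_mul c).mul h2).add (h1.const_mul d)
  refine h.congr_deriv ?_
  have hra : r ^ a * r⁻¹ = r ^ (a - 1) := by
    rw [Real.rpow_sub hr, Real.rpow_one]; field_simp
  unfold Faux
  rw [← hra]; ring

lemma radLap_eqOn {M : ℝ} {f g : ℝ → ℝ} (h : Set.EqOn f g (Set.Ioi 0)) :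
    Set.EqOn (radLap M f) (radLap M g) (Set.Ioi 0) := by
  intro r hr
  have he : f =ᶠ[nhds r] g :=
    Filter.eventuallyEq_of_mem (isOpen_Ioi.mem_nhds hr) h
  unfold radLap
  rw [he.deriv.deriv_eq, he.deriv.eq_of_nhds]

lemma radLap_Faux (M a c d : ℝ) {r : ℝ} (hr : 0 < r) :
    radLap M (Faux a c d) r
      = Faux (a - 2) (c * a * (a + M - 2))
          (c * (2 * a + M - 2) + d * a * (a + M - 2)) r := by
  have he : deriv (Faux a c d) =ᶠ[nhds r] Faux (a - 1) (c * a) (c + d * a) := by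
    filter_upwards [isOpen_Ioi.mem_nhds hr] with x hx
    exact (Faux_hasDerivAt a c d hx).deriv
  unfold radLap
  rw [he.deriv_eq, he.eq_of_nhds, (Faux_hasDerivAt (a - 1) (c * a) (c + d * a) hr).deriv]
  unfold Faux
  have h2 : a - 1 - 1 = a - 2 := by ring
  have hra : r ^ (a - 1) = r ^ (a - 2) * r := by
    rw [show a - 1 = (a - 2) + 1 by ring, Real.rpow_add_one hr.ne']
  rw [h2, hra]
  field_simp
  ring

/-- Coefficients after `k` applications of the radial Laplacian to `r^n log r`. -/
noncomputable def coefLap (M n : ℝ) : ℕ → ℝ × ℝ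
  | 0 => (1, 0)
  | k + 1 =>
      ((coefLap M n k).1 * (n - 2 * k) * ((n - 2 * k) + M - 2),
       (coefLap M n k).1 * (2 * (n - 2 * k) + M - 2)
         + (coefLap M n k).2 * (n - 2 * k) * ((n - 2 * k) + M - 2))

lemma iterate_eqOn (M n : ℝ) (f0 : ℝ → ℝ)
    (h0 : Set.EqOn f0 (Faux n 1 0) (Set.Ioi 0)) (k : ℕ) :
    Set.EqOn ((radLap M)^[k] f0)
      (Faux (n - 2 * k) (coefLap M n k).1 (coefLap M n k).2) (Set.Ioi 0) := by
  induction k with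
  | zero => simpa [coefLap] using h0
  | succ k ih =>
      intro r hr
      rw [Function.iterate_succ_apply', radLap_eqOn ih hr, radLap_Faux _ _ _ _ hr]
      have h1 : n - 2 * (k : ℝ) - 2 = n - 2 * ((k + 1 : ℕ) : ℝ) := by push_cast; ring
      rw [h1]
      simp only [coefLap]

lemma coefLap_fst_zero (M n : ℝ) {k : ℕ} (h : (coefLap M n k).1 = 0) :
    ∀ j, (coefLap M n (k + j)).1 = 0 := by
  intro j
  induction j with
  | zero => simpa using h
  | succ j ih => simp [← Nat.add_assoc, coefLap, ih]

/-- The logarithmic case of Theorem 5 ('fundamental solutions'), radially: for a positive even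
integer `M` and `l ≥ M/2`, `l ≥ 1`, the `l`-fold iterate of the radial Laplace operator `L_M`
annihilates `r ↦ r^{2l−M} log r` on `(0,∞)`. -/
theorem stmt11 (M l : ℕ) (hM : Even M) (hMpos : 0 < M) (hl : 1 ≤ l) (hl2 : M ≤ 2 * l) :
    ∀ r : ℝ, 0 < r →
      (radLap (M : ℝ))^[l] (fun s : ℝ => s ^ (2 * l - M) * Real.log s) r = 0 := by
  obtain ⟨m, hm⟩ := hM
  have hm1 : 1 ≤ m := by omega
  have hml : m ≤ l := by omega
  set n : ℝ := ((2 * l - M : ℕ) : ℝ) with hn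
  have hnval : n = 2 * (l : ℝ) - 2 * m := by
    rw [hn]; push_cast [hl2]; push_cast [hm]; ring
  -- initial equality
  have h0 : Set.EqOn (fun s : ℝ => s ^ (2 * l - M) * Real.log s) (Faux n 1 0)
      (Set.Ioi 0) := by
    intro s hs
    simp only [Faux, hn]
    rw [Real.rpow_natCast]
    ring
  have hiter := iterate_eqOn (M : ℝ) n _ h0 l
  -- coefficients vanish at step l
  -- c vanishes from step (l - m) + 1 on
  have hcast : ((l - m : ℕ) : ℝ) = (l : ℝ) - m := by
    push_cast [hml]; ring
  have hc1 : (coefLap (M : ℝ) n ((l - m) + 1)).1 = 0 := by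
    simp only [coefLap]
    have : n - 2 * ((l - m : ℕ) : ℝ) = 0 := by rw [hcast, hnval]; ring
    rw [this]; ring
  have hc : ∀ k, l - m + 1 ≤ k → (coefLap (M : ℝ) n k).1 = 0 := by
    intro k hk
    obtain ⟨j, rfl⟩ := Nat.exists_eq_add_of_le hk
    exact coefLap_fst_zero _ _ hc1 j
  have hd1 : (coefLap (M : ℝ) n ((l - m) + 1)).2
      = (coefLap (M : ℝ) n (l - m)).1 * ((M : ℝ) - 2) := by
    simp only [coefLap]
    have : n - 2 * ((l - m : ℕ) : ℝ) = 0 := by rw [hcast, hnval]; ring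
    rw [this]; ring
  have hfinal : (coefLap (M : ℝ) n l).1 = 0 ∧ (coefLap (M : ℝ) n l).2 = 0 := by
    rcases eq_or_lt_of_le hm1 with hm2 | hm2
    · -- m = 1 : l - m + 1 = l
      have hM2 : (M : ℝ) = 2 := by
        rw [hm, ← hm2]; norm_num
      have hleq : l - m + 1 = l := by omega
      constructor
      · exact hc l (le_of_eq hleq)
      · rw [← hleq, hd1, hM2]; ring
    · -- m ≥ 2 : at step l-1 the factor (a + M - 2) vanishes and c_{l-1} = 0
      have hl1 : l - m + 1 ≤ l - 1 := by omega
      have hcl1 : (coefLap (M : ℝ) n (l - 1)).1 = 0 := hc _ hl1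
      have hleq : (l - 1) + 1 = l := by omega
      have hfac : n - 2 * ((l - 1 : ℕ) : ℝ) + (M : ℝ) - 2 = 0 := by
        have : ((l - 1 : ℕ) : ℝ) = (l : ℝ) - 1 := by push_cast [hl]; ring
        rw [this, hnval, hm]; push_cast; ring
      constructor
      · rw [← hleq]; simp only [coefLap]; rw [hcl1]; ring
      · rw [← hleq]; simp only [coefLap]
        have : n - 2 * ((l - 1 : ℕ) : ℝ) + (M : ℝ) - 2 = 0 := hfac
        rw [hcl1]
        linear_combination ((coefLap (M : ℝ) n (l - 1)).2 * (n - 2 * ((l - 1 : ℕ) : ℝ))) * hfac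
  intro r hr
  rw [hiter hr, hfinal.1, hfinal.2]
  simp [Faux]
end

section
/- Let M ≥ 1 be an integer, k a natural number, E a real number, V : (0,∞) → ℝ a function, and f : (0,∞) → ℝ twice continuously differentiable. Let H : ℝ^M → ℝ be a nonzero polynomial function, homogeneous of degree k and harmonic (ΔH = 0, with Δ the Laplace operator on ℝ^M). Then the following are equivalent: (i) for all x ∈ ℝ^M with x ≠ 0, −(1/2)·Δ( H(x)·f(|x|²) ) + V(|x|²)·H(x)·f(|x|²) = E·H(x)·f(|x|²); (ii) for all u > 0, −2u·f″(u) − (2k + M)·f′(u) + V(u)·f(u) = E·f(u). -/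
open scoped ContDiff
set_option maxRecDepth 4000


open MeasureTheory

/-- The `i`-th partial derivative (in the standard coordinate directions) of a function
on Euclidean space. -/
noncomputable def partialDeriv' {m : ℕ} (i : Fin m) (f : EuclideanSpace ℝ (Fin m) → ℝ)
    (x : EuclideanSpace ℝ (Fin m)) : ℝ :=
  fderiv ℝ f x (EuclideanSpace.single i 1)

/-- The Laplace operator on Euclidean space: the sum of the second partial derivatives
with respect to the standard coordinates. -/
noncomputable def lap {m : ℕ} (f : EuclideanSpace ℝ (Fin m) → ℝ)
    (x : EuclideanSpace ℝ (Fin m)) : ℝ :=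
  ∑ i, partialDeriv' i (fun y => partialDeriv' i f y) x

lemma aux_contDiff {M : ℕ} (P : MvPolynomial (Fin M) ℝ) :
    ContDiff ℝ ∞ (fun x : EuclideanSpace ℝ (Fin M) => MvPolynomial.eval (fun i => x i) P) := by
  induction P using MvPolynomial.induction_on with
  | C a => simpa using contDiff_const
  | add p q hp hq => simpa [MvPolynomial.eval_add] using hp.add hq
  | mul_X p i hp =>
      simp only [MvPolynomial.eval_mul, MvPolynomial.eval_X]
      exact hp.mul (EuclideanSpace.proj (𝕜 := ℝ) i).contDiff



lemma aux_normsq {M : ℕ} (x : EuclideanSpace ℝ (Fin M)) : ‖x‖ ^ 2 = ∑ i, (x i) ^ 2 := by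
  rw [EuclideanSpace.norm_eq, Real.sq_sqrt (by positivity)]
  simp [Real.norm_eq_abs, sq_abs]

lemma aux_sum_single {M : ℕ} (x : EuclideanSpace ℝ (Fin M)) :
    ∑ i, x i • EuclideanSpace.single i (1:ℝ) = x := by
  simpa [EuclideanSpace.basisFun_apply, EuclideanSpace.basisFun_repr] using
    (EuclideanSpace.basisFun (Fin M) ℝ).sum_repr x

lemma aux_clm_sum {M : ℕ} (L : EuclideanSpace ℝ (Fin M) →L[ℝ] ℝ) (x : EuclideanSpace ℝ (Fin M)) :
    L x = ∑ i, x i * L (EuclideanSpace.single i 1) := by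
  conv_lhs => rw [← aux_sum_single x]
  simp [smul_eq_mul]

lemma aux_euler {M k : ℕ} {H : EuclideanSpace ℝ (Fin M) → ℝ}
    (hH : ContDiff ℝ ∞ H)
    (hhom : ∀ (c : ℝ) (x : EuclideanSpace ℝ (Fin M)), H (c • x) = c ^ k * H x)
    (x : EuclideanSpace ℝ (Fin M)) :
    fderiv ℝ H x x = (k : ℝ) * H x := by
  have hs : HasDerivAt (fun c : ℝ => c • x) x 1 := by
    simpa using (hasDerivAt_id (1:ℝ)).smul_const x
  have hH' : HasFDerivAt H (fderiv ℝ H x) ((1:ℝ) • x) := by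
    rw [one_smul]
    exact (hH.differentiable (by norm_num) x).hasFDerivAt
  have h1 : HasDerivAt (fun c : ℝ => H (c • x)) (fderiv ℝ H x x) 1 :=
    hH'.comp_hasDerivAt 1 hs
  have h2 : HasDerivAt (fun c : ℝ => c ^ k * H x) ((k : ℝ) * H x) 1 := by
    simpa using (hasDerivAt_pow k (1:ℝ)).mul_const (H x)
  have he : (fun c : ℝ => H (c • x)) = fun c : ℝ => c ^ k * H x := funext fun c => hhom c x
  rw [he] at h1
  exact h1.unique h2

lemma aux_key {M k : ℕ} {f : ℝ → ℝ} (hf : ContDiffOn ℝ 2 f (Set.Ioi 0))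
    {H : EuclideanSpace ℝ (Fin M) → ℝ} (hH : ContDiff ℝ ∞ H)
    (hhom : ∀ (c : ℝ) (x : EuclideanSpace ℝ (Fin M)), H (c • x) = c ^ k * H x)
    (hharm : ∀ x, lap H x = 0)
    (x : EuclideanSpace ℝ (Fin M)) (hx : x ≠ 0) :
    lap (fun y => H y * f (‖y‖ ^ 2)) x
      = H x * (4 * ‖x‖ ^ 2 * deriv (deriv f) (‖x‖ ^ 2)
          + (4 * (k:ℝ) + 2 * (M:ℝ)) * deriv f (‖x‖ ^ 2)) := by
  have hu : (0:ℝ) < ‖x‖ ^ 2 := by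
    have := norm_pos_iff.mpr hx
    positivity
  have hfd : ∀ t : ℝ, 0 < t → HasDerivAt f (deriv f t) t := fun t ht =>
    ((hf.contDiffAt (isOpen_Ioi.mem_nhds ht)).differentiableAt (by norm_num)).hasDerivAt
  have hf' : ContDiffOn ℝ 1 (deriv f) (Set.Ioi 0) :=
    hf.deriv_of_isOpen isOpen_Ioi (by norm_num)
  have hfd2 : ∀ t : ℝ, 0 < t → HasDerivAt (deriv f) (deriv (deriv f) t) t := fun t ht =>
    ((hf'.contDiffAt (isOpen_Ioi.mem_nhds ht)).differentiableAt (by norm_num)).hasDerivAt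
  have hHd : Differentiable ℝ H := hH.differentiable (by norm_num)
  have hnorm : ∀ y : EuclideanSpace ℝ (Fin M),
      HasFDerivAt (fun z : EuclideanSpace ℝ (Fin M) => ‖z‖ ^ 2) (2 • innerSL ℝ y) y :=
    fun y => (hasStrictFDerivAt_norm_sq y).hasFDerivAt
  set p : Fin M → EuclideanSpace ℝ (Fin M) → ℝ :=
    fun i y => fderiv ℝ H y (EuclideanSpace.single i 1) with hp_def
  have hp : ∀ i, ContDiff ℝ ∞ (p i) := fun i =>
    (hH.fderiv_right (by simp)).clm_apply contDiff_const
  set Φ : Fin M → EuclideanSpace ℝ (Fin M) → ℝ :=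
    fun i y => H y * (deriv f (‖y‖ ^ 2) * (2 * y i)) + f (‖y‖ ^ 2) * p i y with hΦ_def
  have pd_eq : ∀ i, ∀ y : EuclideanSpace ℝ (Fin M), y ≠ 0 →
      partialDeriv' i (fun z => H z * f (‖z‖ ^ 2)) y = Φ i y := by
    intro i y hy
    have hy2 : (0:ℝ) < ‖y‖ ^ 2 := by
      have := norm_pos_iff.mpr hy
      positivity
    have hF : HasFDerivAt (fun z : EuclideanSpace ℝ (Fin M) => H z * f (‖z‖ ^ 2))
        (H y • (deriv f (‖y‖ ^ 2) • (2 • innerSL ℝ y)) + f (‖y‖ ^ 2) • fderiv ℝ H y) y :=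
      (hHd y).hasFDerivAt.mul ((hfd _ hy2).comp_hasFDerivAt y (hnorm y))
    rw [partialDeriv', hF.fderiv]
    simp [hΦ_def, hp_def, EuclideanSpace.inner_single_right, smul_eq_mul, two_smul]
    ring
  have key_i : ∀ i, partialDeriv' i
        (fun y => partialDeriv' i (fun z => H z * f (‖z‖ ^ 2)) y) x
      = H x * (2 * deriv f (‖x‖ ^ 2)) + 4 * H x * deriv (deriv f) (‖x‖ ^ 2) * (x i) ^ 2
        + 4 * deriv f (‖x‖ ^ 2) * (x i * p i x)
        + f (‖x‖ ^ 2) * partialDeriv' i (fun y => partialDeriv' i H y) x := by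
    intro i
    have heq : (fun y => partialDeriv' i (fun z => H z * f (‖z‖ ^ 2)) y) =ᶠ[nhds x] Φ i := by
      filter_upwards [isOpen_compl_singleton.mem_nhds (by simpa using hx)] with y hy
      exact pd_eq i y (by simpa using hy)
    rw [partialDeriv', heq.fderiv_eq]
    have hc1 : HasFDerivAt (fun y : EuclideanSpace ℝ (Fin M) => f (‖y‖ ^ 2))
        (deriv f (‖x‖ ^ 2) • (2 • innerSL ℝ x)) x :=
      (hfd _ hu).comp_hasFDerivAt x (hnorm x)
    have hc2 : HasFDerivAt (fun y : EuclideanSpace ℝ (Fin M) => deriv f (‖y‖ ^ 2))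
        (deriv (deriv f) (‖x‖ ^ 2) • (2 • innerSL ℝ x)) x :=
      by have := (hfd2 (‖x‖ ^ 2) hu).comp_hasFDerivAt x (hnorm x); exact this
    have hdi : HasFDerivAt (fun y : EuclideanSpace ℝ (Fin M) => 2 * y i)
        ((2:ℝ) • (EuclideanSpace.proj (𝕜 := ℝ) i)) x :=
      ((EuclideanSpace.proj (𝕜 := ℝ) i).hasFDerivAt).const_mul 2
    have hqi : HasFDerivAt (p i) (fderiv ℝ (p i) x) x :=
      ((hp i).differentiable (by norm_num) x).hasFDerivAt
    have hΦi : HasFDerivAt (Φ i)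
        ((H x • (deriv f (‖x‖ ^ 2) • ((2:ℝ) • (EuclideanSpace.proj (𝕜 := ℝ) i))
            + (2 * x i) • (deriv (deriv f) (‖x‖ ^ 2) • (2 • innerSL ℝ x)))
          + (deriv f (‖x‖ ^ 2) * (2 * x i)) • fderiv ℝ H x)
         + (f (‖x‖ ^ 2) • fderiv ℝ (p i) x + p i x • (deriv f (‖x‖ ^ 2) • (2 • innerSL ℝ x)))) x :=
      ((hHd x).hasFDerivAt.mul (hc2.mul hdi)).add (hc1.mul hqi)
    rw [hΦi.fderiv]
    have hproj : (EuclideanSpace.proj (𝕜 := ℝ) i) (EuclideanSpace.single i (1:ℝ)) = 1 := by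
      simp [EuclideanSpace.single_apply]
    have hpd : fderiv ℝ (p i) x (EuclideanSpace.single i 1)
        = partialDeriv' i (fun y => partialDeriv' i H y) x := rfl
    simp only [ContinuousLinearMap.add_apply, ContinuousLinearMap.smul_apply, hpd, hproj,
      innerSL_apply_apply, EuclideanSpace.inner_single_right, ContinuousLinearMap.coe_smul',
      Pi.smul_apply, smul_eq_mul, nsmul_eq_mul, Nat.cast_ofNat, map_one, starRingEnd_apply,
      star_trivial, mul_one, one_mul]
    ring
  have s2 : ∑ i, x i * p i x = (k:ℝ) * H x := by
    rw [← aux_clm_sum]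
    exact aux_euler hH hhom x
  have s3 : (∑ i, partialDeriv' i (fun y => partialDeriv' i H y) x) = 0 := hharm x
  have s1 : (∑ i, (x i) ^ 2) = ‖x‖ ^ 2 := (aux_normsq x).symm
  rw [lap]
  calc (∑ i, partialDeriv' i (fun y => partialDeriv' i (fun z => H z * f (‖z‖ ^ 2)) y) x)
      = ∑ i, (H x * (2 * deriv f (‖x‖ ^ 2))
          + 4 * H x * deriv (deriv f) (‖x‖ ^ 2) * (x i) ^ 2
          + 4 * deriv f (‖x‖ ^ 2) * (x i * p i x)
          + f (‖x‖ ^ 2) * partialDeriv' i (fun y => partialDeriv' i H y) x) :=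
        Finset.sum_congr rfl fun i _ => key_i i
    _ = (M:ℝ) * (H x * (2 * deriv f (‖x‖ ^ 2)))
          + 4 * H x * deriv (deriv f) (‖x‖ ^ 2) * (∑ i, (x i) ^ 2)
          + 4 * deriv f (‖x‖ ^ 2) * (∑ i, x i * p i x)
          + f (‖x‖ ^ 2) * (∑ i, partialDeriv' i (fun y => partialDeriv' i H y) x) := by
        simp [Finset.sum_add_distrib, Finset.mul_sum, Finset.sum_const, Finset.card_univ,
          nsmul_eq_mul]
    _ = H x * (4 * ‖x‖ ^ 2 * deriv (deriv f) (‖x‖ ^ 2)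
          + (4 * (k:ℝ) + 2 * (M:ℝ)) * deriv f (‖x‖ ^ 2)) := by
        rw [s1, s2, s3]; ring

/-- The separation-of-variables equivalence at the core of Theorem 6 ('superopl'):
`H·f(|x|²)` is an eigenfunction of `−½Δ + V(|x|²)` with eigenvalue `E` (away from the origin)
iff `f` satisfies the radial ODE `−2u f″(u) − (2k+M) f′(u) + V(u) f(u) = E f(u)` on `(0,∞)`. -/
theorem stmt12 (M : ℕ) (hM : 1 ≤ M) (k : ℕ) (E : ℝ) (V : ℝ → ℝ)
    (f : ℝ → ℝ) (hf : ContDiffOn ℝ 2 f (Set.Ioi 0))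
    (H : EuclideanSpace ℝ (Fin M) → ℝ) (hH0 : H ≠ 0)
    (hpoly : ∃ P : MvPolynomial (Fin M) ℝ, ∀ x, H x = MvPolynomial.eval (fun i => x i) P)
    (hhom : ∀ (c : ℝ) (x : EuclideanSpace ℝ (Fin M)), H (c • x) = c ^ k * H x)
    (hharm : ∀ x, lap H x = 0) :
    (∀ x : EuclideanSpace ℝ (Fin M), x ≠ 0 →
        -(1 / 2) * lap (fun y => H y * f (‖y‖ ^ 2)) x
            + V (‖x‖ ^ 2) * (H x * f (‖x‖ ^ 2))
          = E * (H x * f (‖x‖ ^ 2)))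
      ↔ (∀ u : ℝ, 0 < u →
        -2 * u * deriv (deriv f) u - (2 * (k : ℝ) + (M : ℝ)) * deriv f u + V u * f u
          = E * f u) := by
  have hHs : ContDiff ℝ ∞ H := by
    obtain ⟨P, hP⟩ := hpoly
    have : H = fun x => MvPolynomial.eval (fun i => x i) P := funext hP
    rw [this]; exact aux_contDiff P
  constructor
  · intro hi u hu
    -- find x with ‖x‖² = u, H x ≠ 0, x ≠ 0
    obtain ⟨x₀, hx₀⟩ : ∃ x₀, H x₀ ≠ 0 := by
      by_contra h
      push_neg at h
      exact hH0 (funext h)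
    obtain ⟨x, hxu, hxH, hxne⟩ :
        ∃ x : EuclideanSpace ℝ (Fin M), ‖x‖ ^ 2 = u ∧ H x ≠ 0 ∧ x ≠ 0 := by
      by_cases h0 : x₀ = 0
      · -- then k = 0 and H is constant
        subst h0
        have hk : ∀ x, H x = H 0 := by
          intro x
          have h1 := hhom 0 x
          rw [zero_smul] at h1
          have hk0 : k = 0 := by
            by_contra hk0
            rw [zero_pow hk0, zero_mul] at h1
            exact hx₀ h1
          rw [hk0, pow_zero, one_mul] at h1
          exact h1.symm
        refine ⟨EuclideanSpace.single ⟨0, hM⟩ (Real.sqrt u), ?_, ?_, ?_⟩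
        · rw [EuclideanSpace.norm_single, Real.norm_eq_abs, sq_abs, Real.sq_sqrt hu.le]
        · rw [hk]; exact hx₀
        · intro h
          have := congr_arg (fun v : EuclideanSpace ℝ (Fin M) => v ⟨0, hM⟩) h
          simp [EuclideanSpace.single_apply] at this
          exact (Real.sqrt_pos.mpr hu).ne' this
      · set c : ℝ := Real.sqrt u / ‖x₀‖ with hc_def
        have hc : 0 < c := div_pos (Real.sqrt_pos.mpr hu) (norm_pos_iff.mpr h0)
        refine ⟨c • x₀, ?_, ?_, smul_ne_zero hc.ne' h0⟩
        · rw [norm_smul, Real.norm_eq_abs, abs_of_pos hc, hc_def,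
            div_mul_cancel₀ _ (norm_ne_zero_iff.mpr h0), Real.sq_sqrt hu.le]
        · rw [hhom]
          exact mul_ne_zero (pow_ne_zero k hc.ne') hx₀
    have h0 := hi x hxne
    rw [aux_key hf hHs hhom hharm x hxne, hxu] at h0
    have hfac : H x * (-2 * u * deriv (deriv f) u - (2 * (k:ℝ) + (M:ℝ)) * deriv f u
        + V u * f u - E * f u) = 0 := by linear_combination h0
    have := (mul_eq_zero.mp hfac).resolve_left hxH
    linarith
  · intro ho x hx
    rw [aux_key hf hHs hhom hharm x hx]
    have hu : (0:ℝ) < ‖x‖ ^ 2 := by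
      have := norm_pos_iff.mpr hx
      positivity
    have := ho (‖x‖ ^ 2) hu
    linear_combination (H x) * this
end
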